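/- arXiv:2404.01267 — 6 statements merged into one kernel-verified Lean document; each statement's English description precedes it below -/
import Mathlib

section
/- Suppose f : ℝ^d → ℝ is μ-strongly convex and twice continuously differentiable, with L-Lipschitz gradient, where 0 < μ < L. For any x, y ∈ ℝ^d, f(x) - f(y) - ∇f(y)ᵀ(x-y) ≥ ‖∇f(x) - ∇f(y)‖²/(2(L-μ)) + μL‖x-y‖²/(2(L-μ)) - (μ/(L-μ)) (∇f(y) - ∇f(x))ᵀ(y-x). -/
open scoped InnerProductSpace
open Set

section Aux

variable {E : Type*} [NormedAddCommGroup E] [InnerProductSpace ℝ E] [CompleteSpace E]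

/-- Derivative of `t ↦ f (y + t • s)` when `f` has a gradient everywhere. -/
lemma hasDerivAt_line {f : E → ℝ} {f' : E → E} (hd : ∀ z, HasGradientAt f (f' z) z)
    (y s : E) (t : ℝ) :
    HasDerivAt (fun t : ℝ => f (y + t • s)) ⟪f' (y + t • s), s⟫_ℝ t := by
  have hγ : HasDerivAt (fun t : ℝ => y + t • s) s t := by
    simpa using ((hasDerivAt_id t).smul_const s).const_add y
  have hfd := hasGradientAt_iff_hasFDerivAt.mp (hd (y + t • s))
  have := hfd.comp_hasDerivAt t hγ
  simpa [InnerProductSpace.toDual_apply_apply, Function.comp_def] using this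

/-- Descent lemma from a one-sided cocoercivity-type bound. -/
lemma descent_lemma {f : E → ℝ} {f' : E → E} {K : ℝ}
    (hd : ∀ z, HasGradientAt f (f' z) z)
    (hl : ∀ a b : E, ⟪f' a - f' b, a - b⟫_ℝ ≤ K * ‖a - b‖ ^ 2)
    (x y : E) :
    f x ≤ f y + ⟪f' y, x - y⟫_ℝ + K / 2 * ‖x - y‖ ^ 2 := by
  set s := x - y with hs
  set φ : ℝ → ℝ := fun t => f (y + t • s) - t * ⟪f' y, s⟫_ℝ - K * ‖s‖ ^ 2 / 2 * t ^ 2 with hφdef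
  have hφ : ∀ t : ℝ, HasDerivAt φ
      (⟪f' (y + t • s), s⟫_ℝ - ⟪f' y, s⟫_ℝ - K * ‖s‖ ^ 2 * t) t := by
    intro t
    have h1 := hasDerivAt_line hd y s t
    have h2 : HasDerivAt (fun t : ℝ => t * ⟪f' y, s⟫_ℝ) ⟪f' y, s⟫_ℝ t := by
      simpa using (hasDerivAt_id t).mul_const ⟪f' y, s⟫_ℝ
    have h3 : HasDerivAt (fun t : ℝ => K * ‖s‖ ^ 2 / 2 * t ^ 2) (K * ‖s‖ ^ 2 * t) t := by
      have := (hasDerivAt_pow 2 t).const_mul (K * ‖s‖ ^ 2 / 2)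
      refine this.congr_deriv ?_
      norm_num
      ring
    exact (h1.sub h2).sub h3
  have hbound : ∀ t ∈ Ioo (0 : ℝ) 1,
      ⟪f' (y + t • s), s⟫_ℝ - ⟪f' y, s⟫_ℝ - K * ‖s‖ ^ 2 * t ≤ 0 := by
    intro t ht
    have h4 := hl (y + t • s) y
    have e : y + t • s - y = t • s := by abel
    rw [e] at h4
    have e2 : ⟪f' (y + t • s) - f' y, t • s⟫_ℝ
        = t * (⟪f' (y + t • s), s⟫_ℝ - ⟪f' y, s⟫_ℝ) := by
      rw [real_inner_smul_right, inner_sub_left]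
    have e3 : ‖t • s‖ ^ 2 = t ^ 2 * ‖s‖ ^ 2 := by
      rw [norm_smul, mul_pow, Real.norm_eq_abs, sq_abs]
    rw [e2, e3] at h4
    have ht0 : 0 < t := ht.1
    nlinarith
  obtain ⟨c, hc, hceq⟩ := exists_hasDerivAt_eq_slope φ
    (fun t => ⟪f' (y + t • s), s⟫_ℝ - ⟪f' y, s⟫_ℝ - K * ‖s‖ ^ 2 * t) one_pos
    (fun t _ => (hφ t).continuousAt.continuousWithinAt) (fun t _ => hφ t)
  have hφ1 : φ 1 - φ 0 ≤ 0 := by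
    have := hbound c hc
    rw [hceq] at this
    have h10 : (1 : ℝ) - 0 ≠ 0 := by norm_num
    field_simp at this
    linarith
  have e0 : φ 0 = f y := by simp [hφdef]
  have e1 : φ 1 = f x - ⟪f' y, s⟫_ℝ - K * ‖s‖ ^ 2 / 2 := by
    simp [hφdef, hs]
  rw [e0, e1] at hφ1
  linarith

/-- First-order condition for a convex differentiable function. -/
lemma convex_first_order {h : E → ℝ} {h' : E → E}
    (hc : ConvexOn ℝ univ h) (hd : ∀ z, HasGradientAt h (h' z) z) (y z : E) :
    ⟪h' y, z - y⟫_ℝ ≤ h z - h y := by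
  set s := z - y with hs
  set φ : ℝ → ℝ := fun t => h (y + t • s) with hφdef
  have hder : HasDerivAt φ ⟪h' y, s⟫_ℝ 0 := by
    have := hasDerivAt_line hd y s 0
    simpa using this
  have hten := hasDerivAt_iff_tendsto_slope.mp hder
  have hmono : Filter.Tendsto (slope φ 0) (nhdsWithin 0 (Ioi (0:ℝ))) (nhds ⟪h' y, s⟫_ℝ) :=
    hten.mono_left (nhdsWithin_mono 0 (fun t ht => by
      simp only [Set.mem_compl_iff, Set.mem_singleton_iff]
      exact ne_of_gt ht))
  refine le_of_tendsto hmono ?_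
  have hmem : Ioo (0:ℝ) 1 ∈ nhdsWithin (0:ℝ) (Ioi (0:ℝ)) :=
    Ioo_mem_nhdsGT_of_mem ⟨le_refl 0, one_pos⟩
  filter_upwards [hmem] with t ht
  have ht0 : 0 < t := ht.1
  have ht1 : t ≤ 1 := le_of_lt ht.2
  have hcomb : h ((1 - t) • y + t • z) ≤ (1 - t) * h y + t * h z :=
    hc.2 (mem_univ y) (mem_univ z) (by linarith) (le_of_lt ht0) (by ring)
  have he : y + t • s = (1 - t) • y + t • z := by
    rw [hs]; module
  have hslope : slope φ 0 t = (φ t - φ 0) / t := by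
    rw [slope_def_field]; ring_nf
  rw [hslope]
  have hφt : φ t ≤ h y + t * (h z - h y) := by
    rw [hφdef]; simp only; rw [he]
    nlinarith [hcomb]
  have hφ0 : φ 0 = h y := by simp [hφdef]
  rw [hφ0, div_le_iff₀ ht0]
  nlinarith [hφt]

lemma hasGradientAt_half_normsq (μ : ℝ) (z : E) :
    HasGradientAt (fun w : E => μ / 2 * ‖w‖ ^ 2) (μ • z) z := by
  have h1 : HasFDerivAt (fun w : E => ⟪w, w⟫_ℝ)
      ((fderivInnerCLM ℝ (z, z)).comp ((ContinuousLinearMap.id ℝ E).prod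
        (ContinuousLinearMap.id ℝ E))) z :=
    (hasFDerivAt_id z).inner ℝ (hasFDerivAt_id z)
  have h2 := h1.const_mul (μ / 2)
  have efun : (fun w : E => μ / 2 * ‖w‖ ^ 2) = fun w => μ / 2 * ⟪w, w⟫_ℝ := by
    funext w; rw [real_inner_self_eq_norm_sq]
  have hCLM : (μ / 2) • ((fderivInnerCLM ℝ (z, z)).comp ((ContinuousLinearMap.id ℝ E).prod
      (ContinuousLinearMap.id ℝ E))) = InnerProductSpace.toDual ℝ E (μ • z) := by
    ext v
    simp [fderivInnerCLM_apply, InnerProductSpace.toDual_apply_apply, real_inner_smul_left,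
      real_inner_comm]
    ring
  rw [hasGradientAt_iff_hasFDerivAt, efun, ← hCLM]
  exact h2

end Aux

/-- Interpolation inequality for μ-strongly convex functions with L-Lipschitz gradient. -/
theorem interpolation_inequality {d : ℕ} (f : EuclideanSpace ℝ (Fin d) → ℝ) (μ L : ℝ)
    (hμ : 0 < μ) (hμL : μ < L) (hf : ContDiff ℝ 2 f)
    (hsc : StrongConvexOn Set.univ μ f)
    (hlip : LipschitzWith (Real.toNNReal L) (gradient f))
    (x y : EuclideanSpace ℝ (Fin d)) :
    f x - f y - ⟪gradient f y, x - y⟫_ℝ ≥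
      ‖gradient f x - gradient f y‖ ^ 2 / (2 * (L - μ)) +
      μ * L * ‖x - y‖ ^ 2 / (2 * (L - μ)) -
      (μ / (L - μ)) * ⟪gradient f y - gradient f x, y - x⟫_ℝ := by
  set g := gradient f with hgdef
  have hL : 0 < L := hμ.trans hμL
  set K : ℝ := L - μ with hKdef
  have hK : 0 < K := by simp [hKdef]; linarith
  have hdiff : Differentiable ℝ f := hf.differentiable two_ne_zero
  have hdf : ∀ z : EuclideanSpace ℝ (Fin d), HasGradientAt f (g z) z := fun z => (hdiff z).hasGradientAt
  have hlipn : ∀ a b : EuclideanSpace ℝ (Fin d), ‖g a - g b‖ ≤ L * ‖a - b‖ := by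
    intro a b
    have := hlip.dist_le_mul a b
    rwa [dist_eq_norm, dist_eq_norm, Real.coe_toNNReal L hL.le] at this
  -- the convex "shifted" function h and its gradient h'
  set h : EuclideanSpace ℝ (Fin d) → ℝ := fun z => f z - μ / 2 * ‖z‖ ^ 2 with hhdef
  set h' : EuclideanSpace ℝ (Fin d) → EuclideanSpace ℝ (Fin d) := fun z => g z - μ • z with hh'def
  have hq : ∀ z : EuclideanSpace ℝ (Fin d), HasGradientAt
      (fun w : EuclideanSpace ℝ (Fin d) => μ / 2 * ‖w‖ ^ 2) (μ • z) z :=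
    fun z => hasGradientAt_half_normsq μ z
  have hdh : ∀ z : EuclideanSpace ℝ (Fin d), HasGradientAt h (h' z) z := by
    intro z
    rw [hasGradientAt_iff_hasFDerivAt]
    have f1 := hasGradientAt_iff_hasFDerivAt.mp (hdf z)
    have f2 := hasGradientAt_iff_hasFDerivAt.mp (hq z)
    have := f1.sub f2
    rw [hh'def]
    simpa [map_sub, Pi.sub_def] using this
  have hconv : ConvexOn ℝ univ h := strongConvexOn_iff_convex.mp hsc
  -- cocoercivity-type bound for h'
  have hcoco : ∀ a b : EuclideanSpace ℝ (Fin d), ⟪h' a - h' b, a - b⟫_ℝ ≤ K * ‖a - b‖ ^ 2 := by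
    intro a b
    have e : h' a - h' b = (g a - g b) - μ • (a - b) := by
      rw [hh'def]; module
    rw [e, inner_sub_left, real_inner_smul_left, real_inner_self_eq_norm_sq]
    have hCS : ⟪g a - g b, a - b⟫_ℝ ≤ ‖g a - g b‖ * ‖a - b‖ := real_inner_le_norm _ _
    have hlb := hlipn a b
    nlinarith [norm_nonneg (a - b), norm_nonneg (g a - g b)]
  -- the two key inequalities at the auxiliary point z0
  set u : EuclideanSpace ℝ (Fin d) := h' x - h' y with hudef
  set c : ℝ := K⁻¹ with hcdef
  have hKc : K * c = 1 := by rw [hcdef]; field_simp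
  set z0 : EuclideanSpace ℝ (Fin d) := x - c • u with hz0def
  have ineq1 : ⟪h' y, z0 - y⟫_ℝ ≤ h z0 - h y := convex_first_order hconv hdh y z0
  have ineq2 : h z0 ≤ h x + ⟪h' x, z0 - x⟫_ℝ + K / 2 * ‖z0 - x‖ ^ 2 :=
    descent_lemma hdh hcoco z0 x
  have e1 : z0 - x = -(c • u) := by rw [hz0def]; abel
  have e2 : z0 - y = (x - y) - c • u := by rw [hz0def]; abel
  have n1 : ‖z0 - x‖ ^ 2 = c ^ 2 * ‖u‖ ^ 2 := by
    rw [e1, norm_neg, norm_smul, mul_pow, Real.norm_eq_abs, sq_abs]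
  have i1 : ⟪h' x, z0 - x⟫_ℝ = -(c * ⟪h' x, u⟫_ℝ) := by
    rw [e1, inner_neg_right, real_inner_smul_right]
  have i2 : ⟪h' y, z0 - y⟫_ℝ = ⟪h' y, x - y⟫_ℝ - c * ⟪h' y, u⟫_ℝ := by
    rw [e2, inner_sub_right, real_inner_smul_right]
  have i3 : ⟪h' x, u⟫_ℝ - ⟪h' y, u⟫_ℝ = ‖u‖ ^ 2 := by
    rw [← inner_sub_left, ← hudef, real_inner_self_eq_norm_sq]
  clear_value g K h h' u c z0
  -- combine into the Bregman bound for h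
  have F1 : h x - h y - ⟪h' y, x - y⟫_ℝ ≥ c / 2 * ‖u‖ ^ 2 := by
    have i3' : c * ⟪h' x, u⟫_ℝ - c * ⟪h' y, u⟫_ℝ = c * ‖u‖ ^ 2 := by
      rw [← mul_sub, i3]
    have eK : K / 2 * (c ^ 2 * ‖u‖ ^ 2) = c / 2 * ‖u‖ ^ 2 := by
      have : K * c ^ 2 = c := by
        calc K * c ^ 2 = (K * c) * c := by ring
        _ = c := by rw [hKc]; ring
      calc K / 2 * (c ^ 2 * ‖u‖ ^ 2) = (K * c ^ 2) * ‖u‖ ^ 2 / 2 := by ring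
      _ = c * ‖u‖ ^ 2 / 2 := by rw [this]
      _ = c / 2 * ‖u‖ ^ 2 := by ring
    rw [i1, n1, eK] at ineq2
    rw [i2] at ineq1
    linarith
  -- translate back to f
  set Δ : EuclideanSpace ℝ (Fin d) := g x - g y with hΔdef
  clear_value Δ
  have eu : u = Δ - μ • (x - y) := by rw [hudef, hh'def, hΔdef]; module
  have E2 : ‖u‖ ^ 2 = ‖Δ‖ ^ 2 - 2 * μ * ⟪Δ, x - y⟫_ℝ + μ ^ 2 * ‖x - y‖ ^ 2 := by
    rw [eu, norm_sub_sq_real, real_inner_smul_right, norm_smul, mul_pow, Real.norm_eq_abs,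
      sq_abs]
    ring
  have E3 : ⟪g y - g x, y - x⟫_ℝ = ⟪Δ, x - y⟫_ℝ := by
    have : g y - g x = -Δ := by rw [hΔdef]; abel
    rw [this, ← neg_sub x y, inner_neg_neg]
  have E1 : h x - h y - ⟪h' y, x - y⟫_ℝ
      = (f x - f y - ⟪g y, x - y⟫_ℝ) - μ / 2 * ‖x - y‖ ^ 2 := by
    rw [hhdef, hh'def]
    simp only [inner_sub_left, real_inner_smul_left]
    have hn : ‖x - y‖ ^ 2 = ‖x‖ ^ 2 - 2 * ⟪x, y⟫_ℝ + ‖y‖ ^ 2 := norm_sub_sq_real x y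
    have hyxy : ⟪y, x - y⟫_ℝ = ⟪x, y⟫_ℝ - ‖y‖ ^ 2 := by
      rw [inner_sub_right, real_inner_comm y x, real_inner_self_eq_norm_sq]
    rw [hyxy]
    linear_combination ((μ / 2) : ℝ) * hn
  rw [E1] at F1
  rw [E3]
  have hKne : K ≠ 0 := ne_of_gt hK
  have hfinal : ∀ P Q R : ℝ, P / (2 * K) + μ * L * Q / (2 * K) - μ / K * R
      = c / 2 * (P - 2 * μ * R + μ ^ 2 * Q) + μ / 2 * Q := by
    intro P Q R
    have hLK : L = K + μ := by rw [hKdef]; ring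
    rw [hcdef, hLK]
    field_simp
    ring
  rw [ge_iff_le]
  rw [hfinal]
  rw [← E2]
  linarith [F1]
end

section
/- Let f : ℝ^d → ℝ be twice continuously differentiable, μ-strongly convex, with M-Lipschitz Hessian and minimizer x_*. Let x_k, x_{k+1} ∈ ℝ^d with f(x_{k+1}) ≤ f(x_k), define J_k = ∫_0^1 ∇²f(x_k + τ(x_{k+1} - x_k)) dτ and C_k = (M/μ^{3/2})√(2(f(x_k) - f(x_*))). Then ‖∇²f(x_*) - J_k‖ ≤ (M/√μ)√(2(f(x_k) - f(x_*))), and consequently (1/(1 + C_k)) ∇²f(x_*) ⪯ J_k ⪯ (1 + C_k) ∇²f(x_*) in the Loewner order. -/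
open scoped InnerProductSpace Matrix.Norms.L2Operator
open Matrix

variable {d : ℕ}

lemma hermitian_smul_one (c : ℝ) : (c • (1 : Matrix (Fin d) (Fin d) ℝ)).IsHermitian := by
  simp [Matrix.IsHermitian, Matrix.conjTranspose_smul]

lemma quad_eq_inner (A : Matrix (Fin d) (Fin d) ℝ) (w : EuclideanSpace ℝ (Fin d)) :
    (WithLp.equiv 2 (Fin d → ℝ) w) ⬝ᵥ (A *ᵥ (WithLp.equiv 2 (Fin d → ℝ) w)) =
      ⟪w, Matrix.toEuclideanCLM (𝕜 := ℝ) A w⟫_ℝ := by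
  rw [EuclideanSpace.inner_eq_star_dotProduct]
  have hcf : ∀ i, (Matrix.toEuclideanCLM (𝕜 := ℝ) A) w i =
      (A *ᵥ (WithLp.equiv 2 (Fin d → ℝ) w)) i := fun i =>
    congrFun (Matrix.ofLp_toEuclideanCLM (𝕜 := ℝ) A w) i
  simp [dotProduct, hcf, mul_comm]

lemma norm_psd {A : Matrix (Fin d) (Fin d) ℝ} {D : ℝ} (hA : A.IsHermitian)
    (h : ‖A‖ ≤ D) : (D • (1 : Matrix (Fin d) (Fin d) ℝ) - A).PosSemidef := by
  refine Matrix.PosSemidef.of_dotProduct_mulVec_nonneg ((hermitian_smul_one D).sub hA) fun x => ?_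
  set w : EuclideanSpace ℝ (Fin d) := (WithLp.equiv 2 _).symm x with hw
  have hx : x = WithLp.equiv 2 (Fin d → ℝ) w := rfl
  have key : ⟪w, Matrix.toEuclideanCLM (𝕜 := ℝ) A w⟫_ℝ ≤ D * ‖w‖ ^ 2 := by
    calc ⟪w, Matrix.toEuclideanCLM (𝕜 := ℝ) A w⟫_ℝ
        ≤ ‖w‖ * ‖Matrix.toEuclideanCLM (𝕜 := ℝ) A w‖ := real_inner_le_norm _ _
      _ ≤ ‖w‖ * (‖Matrix.toEuclideanCLM (𝕜 := ℝ) A‖ * ‖w‖) := by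
          gcongr; exact ContinuousLinearMap.le_opNorm _ _
      _ ≤ ‖w‖ * (D * ‖w‖) := by
          have : ‖Matrix.toEuclideanCLM (𝕜 := ℝ) A‖ ≤ D := by
            rw [← Matrix.cstar_norm_def]; exact h
          exact mul_le_mul_of_nonneg_left
            (mul_le_mul_of_nonneg_right this (norm_nonneg _)) (norm_nonneg _)
      _ = D * ‖w‖ ^ 2 := by ring
  have h2 : x ⬝ᵥ x = ‖w‖ ^ 2 := by
    rw [← real_inner_self_eq_norm_sq, EuclideanSpace.inner_eq_star_dotProduct]
    simp [dotProduct, hx]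
  have h3 : x ⬝ᵥ (A *ᵥ x) ≤ D * ‖w‖ ^ 2 := by
    rw [hx, quad_eq_inner]; exact key
  simp only [star_trivial, Matrix.sub_mulVec, Matrix.smul_mulVec,
    Matrix.one_mulVec, dotProduct_sub, dotProduct_smul]
  rw [smul_eq_mul, h2]
  linarith

noncomputable def quadCLM (v : Fin d → ℝ) : Matrix (Fin d) (Fin d) ℝ →L[ℝ] ℝ :=
  LinearMap.toContinuousLinearMap
    { toFun := fun A => v ⬝ᵥ (A *ᵥ v)
      map_add' := by intro A B; simp [Matrix.add_mulVec, dotProduct_add]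
      map_smul' := by intro c A; simp [Matrix.smul_mulVec] }

noncomputable def transCLM : Matrix (Fin d) (Fin d) ℝ →L[ℝ] Matrix (Fin d) (Fin d) ℝ :=
  LinearMap.toContinuousLinearMap
    { toFun := fun A => Aᵀ
      map_add' := by intro A B; simp [Matrix.transpose_add]
      map_smul' := by intro c A; simp }

lemma integral_posSemidef {F : ℝ → Matrix (Fin d) (Fin d) ℝ}
    (hint : IntervalIntegrable F MeasureTheory.volume 0 1)
    (h : ∀ τ ∈ Set.Icc (0:ℝ) 1, (F τ).PosSemidef) :
    (∫ τ in (0:ℝ)..1, F τ).PosSemidef := by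
  have hct : ∀ A : Matrix (Fin d) (Fin d) ℝ, Aᴴ = Aᵀ := fun A => by
    ext i j; simp [Matrix.conjTranspose_apply]
  refine Matrix.PosSemidef.of_dotProduct_mulVec_nonneg ?_ ?_
  · have heq : (∫ τ in (0:ℝ)..1, F τ)ᵀ = ∫ τ in (0:ℝ)..1, (F τ)ᵀ := by
      exact
        ((transCLM (d := d)).intervalIntegral_comp_comm hint).symm
    have h2 : ∫ τ in (0:ℝ)..1, (F τ)ᵀ = ∫ τ in (0:ℝ)..1, F τ :=
      intervalIntegral.integral_congr fun τ hτ => by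
        rw [Set.uIcc_of_le zero_le_one] at hτ
        rw [← hct (F τ)]; exact (h τ hτ).1
    show _ᴴ = _
    rw [hct, heq, h2]
  · intro x
    simp only [star_trivial]
    have := ((quadCLM (d := d) x)).intervalIntegral_comp_comm hint
    have heq : x ⬝ᵥ ((∫ τ in (0:ℝ)..1, F τ) *ᵥ x) = ∫ τ in (0:ℝ)..1, x ⬝ᵥ (F τ *ᵥ x) := by
      simpa [quadCLM, LinearMap.coe_toContinuousLinearMap'] using this.symm
    rw [heq]
    apply intervalIntegral.integral_nonneg zero_le_one
    intro τ hτ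
    simpa using (h τ hτ).dotProduct_mulVec_nonneg x

lemma quad_lower {A : Matrix (Fin d) (Fin d) ℝ} {μ : ℝ}
    (h : (A - μ • (1 : Matrix (Fin d) (Fin d) ℝ)).PosSemidef)
    (v : EuclideanSpace ℝ (Fin d)) :
    μ * ‖v‖ ^ 2 ≤ ⟪Matrix.toEuclideanCLM (𝕜 := ℝ) A v, v⟫_ℝ := by
  have := h.dotProduct_mulVec_nonneg (WithLp.equiv 2 (Fin d → ℝ) v)
  rw [star_trivial] at this
  rw [Matrix.sub_mulVec, Matrix.smul_mulVec, Matrix.one_mulVec,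
    dotProduct_sub, dotProduct_smul, sub_nonneg] at this
  have h1 := quad_eq_inner A v
  have h2 : (WithLp.equiv 2 (Fin d → ℝ) v) ⬝ᵥ (WithLp.equiv 2 (Fin d → ℝ) v) = ‖v‖ ^ 2 := by
    rw [← real_inner_self_eq_norm_sq, EuclideanSpace.inner_eq_star_dotProduct]
    simp [dotProduct]
  rw [h1, h2, smul_eq_mul] at this
  rw [real_inner_comm]
  exact this

lemma strong_conv (f : EuclideanSpace ℝ (Fin d) → ℝ) (μ : ℝ)
    (Hess : EuclideanSpace ℝ (Fin d) → Matrix (Fin d) (Fin d) ℝ)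
    (hf : ContDiff ℝ 2 f)
    (hHess : ∀ x, HasFDerivAt (gradient f) (Matrix.toEuclideanCLM (𝕜 := ℝ) (Hess x)) x)
    (hstr : ∀ x, (Hess x - μ • (1 : Matrix (Fin d) (Fin d) ℝ)).PosSemidef)
    (xs : EuclideanSpace ℝ (Fin d)) (hmin : ∀ y, f xs ≤ f y)
    (x : EuclideanSpace ℝ (Fin d)) :
    μ / 2 * ‖x - xs‖ ^ 2 ≤ f x - f xs := by
  have hdiff : Differentiable ℝ f := hf.differentiable (by norm_num)
  set v := x - xs with hv
  set γ : ℝ → EuclideanSpace ℝ (Fin d) := fun t => xs + t • v with hγdef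
  have hγ : ∀ t : ℝ, HasDerivAt γ v t := fun t => by
    simpa [hγdef] using ((hasDerivAt_id t).smul_const v).const_add xs
  -- gradient at xs is zero
  have hgxs : gradient f xs = 0 := by
    have hga : HasGradientAt f (gradient f xs) xs := (hdiff xs).hasGradientAt
    have hloc : IsLocalMin f xs := Filter.Eventually.of_forall hmin
    have h0 := hloc.hasFDerivAt_eq_zero hga.hasFDerivAt
    have := congrArg (InnerProductSpace.toDual ℝ (EuclideanSpace ℝ (Fin d))).symm h0
    simpa [gradient] using this
  -- first derivative of f ∘ γ
  set g₁ : ℝ → ℝ := fun t => ⟪gradient f (γ t), v⟫_ℝ with hg₁def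
  have hd1 : ∀ t : ℝ, HasDerivAt (fun s => f (γ s)) (g₁ t) t := fun t => by
    have := ((hdiff (γ t)).hasGradientAt.hasFDerivAt).comp_hasDerivAt t (hγ t)
    simpa [hg₁def, Function.comp_def] using this
  -- derivative of g₁
  have hd2 : ∀ t : ℝ, HasDerivAt g₁
      (⟪Matrix.toEuclideanCLM (𝕜 := ℝ) (Hess (γ t)) v, v⟫_ℝ) t := fun t => by
    have hu : HasDerivAt (fun s => gradient f (γ s))
        (Matrix.toEuclideanCLM (𝕜 := ℝ) (Hess (γ t)) v) t :=
      (hHess (γ t)).comp_hasDerivAt t (hγ t)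
    have := hu.inner ℝ (hasDerivAt_const t v)
    simpa [hg₁def] using this
  -- φ := g₁ - μ t ‖v‖² has nonneg derivative
  set φ : ℝ → ℝ := fun t => g₁ t - μ * t * ‖v‖ ^ 2 with hφdef
  have hdφ : ∀ t : ℝ, HasDerivAt φ
      (⟪Matrix.toEuclideanCLM (𝕜 := ℝ) (Hess (γ t)) v, v⟫_ℝ - μ * ‖v‖ ^ 2) t := fun t => by
    have h2 : HasDerivAt (fun t : ℝ => μ * t * ‖v‖ ^ 2) (μ * ‖v‖ ^ 2) t := by
      simpa [mul_comm, mul_assoc, mul_left_comm] using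
        (((hasDerivAt_id t).const_mul μ).mul_const (‖v‖ ^ 2))
    exact (hd2 t).sub h2
  have hφmono : Monotone φ :=
    monotone_of_deriv_nonneg (fun t => (hdφ t).differentiableAt) fun t => by
      rw [(hdφ t).deriv]
      have := quad_lower (hstr (γ t)) v
      linarith
  have hφ0 : φ 0 = 0 := by
    simp only [hφdef, hg₁def, hγdef, zero_smul, add_zero, hgxs, inner_zero_left, mul_zero,
      zero_mul, sub_zero]
  -- g₁ t ≥ μ t ‖v‖² on [0,1]
  have hg₁low : ∀ t ∈ Set.uIcc (0:ℝ) 1, μ * t * ‖v‖ ^ 2 ≤ g₁ t := fun t ht => by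
    rw [Set.uIcc_of_le zero_le_one] at ht
    have := hφmono ht.1
    rw [hφ0] at this
    simp only [hφdef] at this
    linarith
  -- FTC
  have hg₁cont : Continuous g₁ := by
    have hgc : Continuous (gradient f) := by
      have : Differentiable ℝ (gradient f) := fun y => (hHess y).differentiableAt
      exact this.continuous
    exact (hgc.comp (continuous_const.add (continuous_id.smul continuous_const))).inner continuous_const
  have hFTC : ∫ t in (0:ℝ)..1, g₁ t = f (γ 1) - f (γ 0) :=
    intervalIntegral.integral_eq_sub_of_hasDerivAt (fun t _ => hd1 t)
      (hg₁cont.intervalIntegrable 0 1)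
  have hγ1 : γ 1 = x := by simp [hγdef, hv]
  have hγ0 : γ 0 = xs := by simp [hγdef]
  have hintlow : μ / 2 * ‖v‖ ^ 2 ≤ ∫ t in (0:ℝ)..1, g₁ t := by
    have h1 : ∫ t in (0:ℝ)..1, μ * t * ‖v‖ ^ 2 = μ / 2 * ‖v‖ ^ 2 := by
      have : ∫ t in (0:ℝ)..1, μ * t * ‖v‖ ^ 2
          = (μ * ‖v‖ ^ 2) * ∫ t in (0:ℝ)..1, t := by
        rw [← intervalIntegral.integral_const_mul]
        congr 1; funext t; ring
      rw [this, integral_id]; ring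
    rw [← h1]
    apply intervalIntegral.integral_mono_on zero_le_one
    · exact Continuous.intervalIntegrable ((continuous_const.mul continuous_id).mul continuous_const) 0 1
    · exact hg₁cont.intervalIntegrable 0 1
    · intro t ht
      exact hg₁low t (by rw [Set.uIcc_of_le zero_le_one]; exact ht)
  rw [hFTC, hγ1, hγ0] at hintlow
  exact hintlow

lemma psd_add {A B : Matrix (Fin d) (Fin d) ℝ} (hA : A.PosSemidef) (hB : B.PosSemidef) :
    (A + B).PosSemidef := by
  refine Matrix.PosSemidef.of_dotProduct_mulVec_nonneg (hA.1.add hB.1) fun x => ?_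
  have := add_nonneg (hA.dotProduct_mulVec_nonneg x) (hB.dotProduct_mulVec_nonneg x)
  simpa [Matrix.add_mulVec, dotProduct_add] using this

lemma psd_smul {A : Matrix (Fin d) (Fin d) ℝ} {c : ℝ} (hA : A.PosSemidef) (hc : 0 ≤ c) :
    (c • A).PosSemidef := by
  have h1 : Aᵀ = A := by
    have h2 := hA.1.eq
    rwa [show Aᴴ = Aᵀ from by ext i j; simp] at h2
  refine Matrix.PosSemidef.of_dotProduct_mulVec_nonneg (by simp [Matrix.IsHermitian, Matrix.conjTranspose_smul, h1]) fun x => ?_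
  have := mul_nonneg hc (hA.dotProduct_mulVec_nonneg x)
  simpa [Matrix.smul_mulVec, dotProduct_smul] using this


/-- Bound on the deviation of the averaged Hessian `J_k` from `∇²f(x_*)`, and the
resulting Loewner sandwich `(1/(1+C_k)) ∇²f(x_*) ⪯ J_k ⪯ (1+C_k) ∇²f(x_*)`. -/
theorem averaged_hessian_close_to_hessian_at_opt {d : ℕ}
    (f : EuclideanSpace ℝ (Fin d) → ℝ) (μ M : ℝ) (hμ : 0 < μ) (hM : 0 < M)
    (Hess : EuclideanSpace ℝ (Fin d) → Matrix (Fin d) (Fin d) ℝ)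
    (hf : ContDiff ℝ 2 f)
    (hHess : ∀ x, HasFDerivAt (gradient f) (Matrix.toEuclideanCLM (𝕜 := ℝ) (Hess x)) x)
    (hsymm : ∀ x, (Hess x).IsHermitian)
    (hstr : ∀ x, (Hess x - μ • (1 : Matrix (Fin d) (Fin d) ℝ)).PosSemidef)
    (hlipH : ∀ x y, ‖Hess x - Hess y‖ ≤ M * ‖x - y‖)
    (xs : EuclideanSpace ℝ (Fin d)) (hmin : ∀ y, f xs ≤ f y)
    (xk xk1 : EuclideanSpace ℝ (Fin d)) (hdec : f xk1 ≤ f xk)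
    (J : Matrix (Fin d) (Fin d) ℝ)
    (hJ : J = ∫ τ in (0:ℝ)..1, Hess (xk + τ • (xk1 - xk)))
    (C : ℝ) (hC : C = (M / μ ^ ((3:ℝ)/2)) * Real.sqrt (2 * (f xk - f xs))) :
    ‖Hess xs - J‖ ≤ (M / Real.sqrt μ) * Real.sqrt (2 * (f xk - f xs)) ∧
    (J - (1 / (1 + C)) • Hess xs).PosSemidef ∧
    ((1 + C) • Hess xs - J).PosSemidef := by
  set γ : ℝ → EuclideanSpace ℝ (Fin d) := fun τ => xk + τ • (xk1 - xk) with hγdef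
  set Δ : ℝ := f xk - f xs with hΔ
  have hΔ0 : 0 ≤ Δ := sub_nonneg.2 (hmin xk)
  set D : ℝ := (M / Real.sqrt μ) * Real.sqrt (2 * Δ) with hD
  set R : ℝ := Real.sqrt (2 * Δ / μ) with hR
  have hsqμ : 0 < Real.sqrt μ := Real.sqrt_pos.2 hμ
  -- distance bounds
  have hdist : ∀ y : EuclideanSpace ℝ (Fin d), f y ≤ f xk → ‖y - xs‖ ≤ R := by
    intro y hy
    have h1 := strong_conv f μ Hess hf hHess hstr xs hmin y
    have h2 : ‖y - xs‖ ^ 2 ≤ 2 * Δ / μ := by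
      rw [le_div_iff₀ hμ]
      have h3 : f y - f xs ≤ Δ := by rw [hΔ]; linarith
      nlinarith
    calc ‖y - xs‖ = Real.sqrt (‖y - xs‖ ^ 2) := by
          rw [Real.sqrt_sq (norm_nonneg _)]
      _ ≤ R := Real.sqrt_le_sqrt h2
  -- D = M * R
  have hDR : D = M * R := by
    rw [hD, hR, Real.sqrt_div (by linarith : (0:ℝ) ≤ 2 * Δ)]
    ring
  -- continuity of Hess
  have hHcont : Continuous Hess := by
    have : LipschitzWith (Real.toNNReal M) Hess := by
      apply LipschitzWith.of_dist_le_mul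
      intro x y
      rw [dist_eq_norm, dist_eq_norm]
      calc ‖Hess x - Hess y‖ ≤ M * ‖x - y‖ := hlipH x y
        _ = (Real.toNNReal M : ℝ) * ‖x - y‖ := by
            rw [Real.coe_toNNReal M hM.le]
    exact this.continuous
  have hγcont : Continuous γ := continuous_const.add (continuous_id.smul continuous_const)
  have hint : IntervalIntegrable (fun τ => Hess (γ τ)) MeasureTheory.volume 0 1 :=
    (hHcont.comp hγcont).intervalIntegrable 0 1
  -- norm bound
  have hbound : ∀ τ ∈ Set.Icc (0:ℝ) 1, ‖Hess xs - Hess (γ τ)‖ ≤ D := by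
    intro τ hτ
    have hsplit : xs - γ τ = (1 - τ) • (xs - xk) + τ • (xs - xk1) := by
      simp only [hγdef]
      module
    have h1 : ‖xs - γ τ‖ ≤ R := by
      rw [hsplit]
      calc ‖(1 - τ) • (xs - xk) + τ • (xs - xk1)‖
          ≤ ‖(1 - τ) • (xs - xk)‖ + ‖τ • (xs - xk1)‖ := norm_add_le _ _
        _ = (1 - τ) * ‖xs - xk‖ + τ * ‖xs - xk1‖ := by
            rw [norm_smul, norm_smul, Real.norm_eq_abs, Real.norm_eq_abs,
              abs_of_nonneg (by linarith [hτ.2]), abs_of_nonneg hτ.1]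
        _ ≤ (1 - τ) * R + τ * R := by
            have e1 : ‖xs - xk‖ ≤ R := by
              rw [norm_sub_rev]; exact hdist xk le_rfl
            have e2 : ‖xs - xk1‖ ≤ R := by
              rw [norm_sub_rev]; exact hdist xk1 hdec
            have := hτ.1; have := hτ.2
            nlinarith
        _ = R := by ring
    calc ‖Hess xs - Hess (γ τ)‖ ≤ M * ‖xs - γ τ‖ := hlipH _ _
      _ ≤ M * R := by nlinarith
      _ = D := hDR.symm
  have hsub : Hess xs - J = ∫ τ in (0:ℝ)..1, (Hess xs - Hess (γ τ)) := by
    rw [hJ, intervalIntegral.integral_sub intervalIntegrable_const hint,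
      intervalIntegral.integral_const]
    simp [hγdef]
  have hnorm : ‖Hess xs - J‖ ≤ D := by
    rw [hsub]
    have := intervalIntegral.norm_integral_le_of_norm_le_const
      (a := (0:ℝ)) (b := 1) (C := D)
      (f := fun τ => Hess xs - Hess (γ τ)) ?_
    · simpa using this
    · intro τ hτ
      rw [Set.uIoc_of_le zero_le_one] at hτ
      exact hbound τ ⟨hτ.1.le, hτ.2⟩
  refine ⟨hnorm, ?_, ?_⟩ <;>
  · -- common setup
    have hJμ : (J - μ • (1 : Matrix (Fin d) (Fin d) ℝ)).PosSemidef := by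
      have heq : J - μ • (1 : Matrix (Fin d) (Fin d) ℝ)
          = ∫ τ in (0:ℝ)..1, (Hess (γ τ) - μ • (1 : Matrix (Fin d) (Fin d) ℝ)) := by
        rw [hJ, intervalIntegral.integral_sub hint intervalIntegrable_const,
          intervalIntegral.integral_const]
        simp [hγdef]
      rw [heq]
      exact integral_posSemidef (hint.sub intervalIntegrable_const)
        (fun τ hτ => hstr (γ τ))
    have hJherm : J.IsHermitian := by
      have := hJμ.1.add (hermitian_smul_one (d := d) μ)
      simpa using this
    have hC0 : 0 ≤ C := by
      rw [hC]
      positivity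
    have hCμ : C * μ = D := by
      rw [hC, hD]
      have h32 : μ ^ ((3:ℝ)/2) = μ * Real.sqrt μ := by
        rw [show (3:ℝ)/2 = 1 + 1/2 by norm_num, Real.rpow_add hμ, Real.rpow_one,
          ← Real.sqrt_eq_rpow]
      rw [h32]
      field_simp
    have hub : (D • (1 : Matrix (Fin d) (Fin d) ℝ) - (J - Hess xs)).PosSemidef := by
      apply norm_psd (hJherm.sub (hsymm xs))
      rw [norm_sub_rev]; exact hnorm
    have hub2 : (D • (1 : Matrix (Fin d) (Fin d) ℝ) - (Hess xs - J)).PosSemidef :=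
      norm_psd ((hsymm xs).sub hJherm) hnorm
    first
    | · -- lower bound : J - (1/(1+C)) • Hess xs
        have hkey : ((1 + C) • J - Hess xs).PosSemidef := by
          have heq : (1 + C) • J - Hess xs
              = (D • (1 : Matrix (Fin d) (Fin d) ℝ) - (Hess xs - J))
                + C • (J - μ • (1 : Matrix (Fin d) (Fin d) ℝ)) := by
            rw [← hCμ]
            module
          rw [heq]
          exact psd_add hub2 (psd_smul hJμ hC0)
        have hfin : J - (1 / (1 + C)) • Hess xs
            = (1 / (1 + C)) • ((1 + C) • J - Hess xs) := by
          rw [smul_sub, smul_smul]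
          rw [show (1 / (1 + C)) * (1 + C) = 1 by field_simp]
          rw [one_smul]
        rw [hfin]
        exact psd_smul hkey (by positivity)
    | · -- upper bound : (1+C) • Hess xs - J
        have heq : (1 + C) • Hess xs - J
            = (D • (1 : Matrix (Fin d) (Fin d) ℝ) - (J - Hess xs))
              + C • (Hess xs - μ • (1 : Matrix (Fin d) (Fin d) ℝ)) := by
          rw [← hCμ]
          module
        rw [heq]
        exact psd_add hub (psd_smul (hstr xs) hC0)
end

section
/- Let f : ℝ^d → ℝ be twice continuously differentiable, μ-strongly convex with M-Lipschitz Hessian and minimizer x_*. Let x_k ∈ ℝ^d, define G_k = ∫_0^1 ∇²f(x_k + τ(x_* - x_k)) dτ and C_k = (M/μ^{3/2})√(2(f(x_k) - f(x_*))). Then for any τ̃ ∈ [0,1], (1/(1 + C_k)) G_k ⪯ ∇²f(x_k + τ̃(x_* - x_k)) ⪯ (1 + C_k) G_k. -/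
open scoped InnerProductSpace Matrix.Norms.L2Operator
open Matrix

section Aux
variable {d : ℕ}


variable {d : ℕ}

/-- quadratic form of a matrix via the Euclidean CLM -/
lemma quad_eq (A : Matrix (Fin d) (Fin d) ℝ) (y : EuclideanSpace ℝ (Fin d)) :
    ⟪y, (Matrix.toEuclideanCLM (𝕜 := ℝ) A) y⟫_ℝ =
      dotProduct (WithLp.equiv 2 _ y) (A *ᵥ (WithLp.equiv 2 _ y)) := by
  rw [EuclideanSpace.inner_eq_star_dotProduct]
  simp [Matrix.ofLp_toEuclideanCLM, Matrix.toLin'_apply]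
  exact dotProduct_comm _ _

lemma smul_psd {A : Matrix (Fin d) (Fin d) ℝ} (hA : A.PosSemidef) {c : ℝ} (hc : 0 ≤ c) :
    (c • A).PosSemidef := by
  refine Matrix.PosSemidef.of_dotProduct_mulVec_nonneg ?_ (fun x => ?_)
  · unfold Matrix.IsHermitian
    rw [Matrix.conjTranspose_smul, hA.1.eq]
    simp
  · rw [Matrix.smul_mulVec, dotProduct_smul]
    exact mul_nonneg hc (hA.dotProduct_mulVec_nonneg x)

lemma psd_of_l2norm_le (A : Matrix (Fin d) (Fin d) ℝ) (hA : A.IsHermitian)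
    {c : ℝ} (h : ‖A‖ ≤ c) : (c • (1 : Matrix (Fin d) (Fin d) ℝ) + A).PosSemidef := by
  have hc : 0 ≤ c := le_trans (norm_nonneg _) h
  refine Matrix.PosSemidef.of_dotProduct_mulVec_nonneg ?_ (fun x => ?_)
  · unfold Matrix.IsHermitian
    rw [Matrix.conjTranspose_add, Matrix.conjTranspose_smul, Matrix.conjTranspose_one, hA.eq]
    simp
  · set y : EuclideanSpace ℝ (Fin d) := (WithLp.equiv 2 _).symm x with hy
    have hx : x = WithLp.equiv 2 _ y := rfl
    have h1 : dotProduct x (A *ᵥ x) = ⟪y, (Matrix.toEuclideanCLM (𝕜 := ℝ) A) y⟫_ℝ := by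
      rw [quad_eq, ← hx]
    have h2 : |⟪y, (Matrix.toEuclideanCLM (𝕜 := ℝ) A) y⟫_ℝ| ≤ c * ‖y‖ ^ 2 := by
      calc |⟪y, (Matrix.toEuclideanCLM (𝕜 := ℝ) A) y⟫_ℝ|
          ≤ ‖y‖ * ‖(Matrix.toEuclideanCLM (𝕜 := ℝ) A) y‖ := abs_real_inner_le_norm y _
        _ ≤ ‖y‖ * (‖A‖ * ‖y‖) := by
            refine mul_le_mul_of_nonneg_left ?_ (norm_nonneg _)
            calc ‖(Matrix.toEuclideanCLM (𝕜 := ℝ) A) y‖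
                ≤ ‖(Matrix.toEuclideanCLM (𝕜 := ℝ) A)‖ * ‖y‖ :=
                  ContinuousLinearMap.le_opNorm _ y
              _ = ‖A‖ * ‖y‖ := by rw [← Matrix.cstar_norm_def]
        _ ≤ ‖y‖ * (c * ‖y‖) := by
            refine mul_le_mul_of_nonneg_left (mul_le_mul_of_nonneg_right h (norm_nonneg _))
              (norm_nonneg _)
        _ = c * ‖y‖ ^ 2 := by ring
    have h3 : dotProduct x x = ‖y‖ ^ 2 := by
      have := real_inner_self_eq_norm_sq y
      rw [EuclideanSpace.inner_eq_star_dotProduct] at this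
      simp at this
      exact this
    have h4 : -(c * ‖y‖ ^ 2) ≤ dotProduct x (A *ᵥ x) := by
      rw [h1]; exact neg_le_of_abs_le h2
    simp only [Matrix.add_mulVec, Matrix.smul_mulVec, Matrix.one_mulVec,
      dotProduct_add, dotProduct_smul, star_trivial, smul_eq_mul]
    rw [h3]
    linarith

/-- lower quadratic bound from `Hess - μ•1` PSD -/
lemma quad_lb {A : Matrix (Fin d) (Fin d) ℝ} {μ : ℝ}
    (h : (A - μ • (1 : Matrix (Fin d) (Fin d) ℝ)).PosSemidef) (y : EuclideanSpace ℝ (Fin d)) :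
    μ * ‖y‖ ^ 2 ≤ ⟪y, (Matrix.toEuclideanCLM (𝕜 := ℝ) A) y⟫_ℝ := by
  have h2 := h.dotProduct_mulVec_nonneg (WithLp.equiv 2 _ y)
  have h3 : dotProduct (WithLp.equiv 2 _ y) (WithLp.equiv 2 _ y) = ‖y‖ ^ 2 := by
    have := real_inner_self_eq_norm_sq y
    rw [EuclideanSpace.inner_eq_star_dotProduct] at this
    simpa using this
  rw [quad_eq]
  simp only [Matrix.sub_mulVec, Matrix.smul_mulVec, Matrix.one_mulVec,
    dotProduct_sub, dotProduct_smul, star_trivial, smul_eq_mul] at h2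
  rw [h3] at h2
  linarith


lemma strong_convex_bound (f : EuclideanSpace ℝ (Fin d) → ℝ) (μ : ℝ) (hμ : 0 < μ)
    (Hess : EuclideanSpace ℝ (Fin d) → Matrix (Fin d) (Fin d) ℝ)
    (hf : ContDiff ℝ 2 f)
    (hHess : ∀ x, HasFDerivAt (gradient f) (Matrix.toEuclideanCLM (𝕜 := ℝ) (Hess x)) x)
    (hstr : ∀ x, (Hess x - μ • (1 : Matrix (Fin d) (Fin d) ℝ)).PosSemidef)
    (xs xk : EuclideanSpace ℝ (Fin d)) (hmin : ∀ y, f xs ≤ f y) :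
    μ / 2 * ‖xk - xs‖ ^ 2 ≤ f xk - f xs := by
  set v := xk - xs with hv
  set z : ℝ → EuclideanSpace ℝ (Fin d) := fun t => xs + t • v with hzdef
  have hdiff : Differentiable ℝ f := hf.differentiable (by norm_num)
  -- gradient at the minimizer is zero
  have hgrad0 : gradient f xs = 0 := by
    have hloc : IsLocalMin f xs := Filter.Eventually.of_forall hmin
    have := hloc.fderiv_eq_zero
    unfold gradient
    rw [this, map_zero]
  have hz : ∀ t : ℝ, HasDerivAt z v t := by
    intro t
    have : HasDerivAt (fun t : ℝ => t • v) ((1 : ℝ) • v) t := (hasDerivAt_id t).smul_const v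
    have h := this.const_add xs
    rw [one_smul] at h
    exact h
  -- derivative of the directional gradient
  set φ : ℝ → ℝ := fun t => ⟪gradient f (z t), v⟫_ℝ with hφdef
  have hφ' : ∀ t : ℝ, HasDerivAt φ
      ⟪(Matrix.toEuclideanCLM (𝕜 := ℝ) (Hess (z t))) v, v⟫_ℝ t := by
    intro t
    have h1 : HasDerivAt (fun t => gradient f (z t))
        ((Matrix.toEuclideanCLM (𝕜 := ℝ) (Hess (z t))) v) t :=
      (hHess (z t)).comp_hasDerivAt t (hz t)
    have h2 := h1.inner ℝ (hasDerivAt_const t v)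
    simpa only [inner_zero_right, inner_zero_left, add_zero, zero_add] using h2
  have hQ : ∀ t : ℝ, μ * ‖v‖ ^ 2 ≤ ⟪(Matrix.toEuclideanCLM (𝕜 := ℝ) (Hess (z t))) v, v⟫_ℝ := by
    intro t
    rw [real_inner_comm]
    exact quad_lb (hstr (z t)) v
  -- φ t ≥ μ ‖v‖² t for t ≥ 0
  have hφ0 : φ 0 = 0 := by simp only [hφdef, hzdef, zero_smul, add_zero, hgrad0, inner_zero_left]
  set ψ : ℝ → ℝ := fun t => φ t - μ * ‖v‖ ^ 2 * t with hψdef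
  have hψ' : ∀ t : ℝ, HasDerivAt ψ
      (⟪(Matrix.toEuclideanCLM (𝕜 := ℝ) (Hess (z t))) v, v⟫_ℝ - μ * ‖v‖ ^ 2) t := by
    intro t
    exact ((hφ' t).sub ((hasDerivAt_id t).const_mul (μ * ‖v‖ ^ 2))).congr_deriv (by ring)
  have hψmono : Monotone ψ := by
    refine monotone_of_deriv_nonneg (fun t => (hψ' t).differentiableAt) (fun t => ?_)
    rw [(hψ' t).deriv]
    linarith [hQ t]
  have hφlb : ∀ t : ℝ, 0 ≤ t → μ * ‖v‖ ^ 2 * t ≤ φ t := by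
    intro t ht
    have := hψmono ht
    simp only [hψdef, hφ0] at this ⊢
    linarith
  -- derivative of g = f ∘ z
  set g : ℝ → ℝ := fun t => f (z t) with hgdef
  have hg' : ∀ t : ℝ, HasDerivAt g (φ t) t := by
    intro t
    have h1 : HasFDerivAt f (InnerProductSpace.toDual ℝ _ (gradient f (z t))) (z t) :=
      (hdiff (z t)).hasGradientAt.hasFDerivAt
    have h2 := h1.comp_hasDerivAt t (hz t)
    refine h2.congr_deriv ?_
    simp [hφdef, InnerProductSpace.toDual_apply_apply]
  set h : ℝ → ℝ := fun t => g t - μ * ‖v‖ ^ 2 / 2 * t ^ 2 with hhdef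
  have hh' : ∀ t : ℝ, HasDerivAt h (φ t - μ * ‖v‖ ^ 2 * t) t := by
    intro t
    have hp : HasDerivAt (fun t : ℝ => t ^ 2) (2 * t) t := by simpa using hasDerivAt_pow 2 t
    have := (hg' t).sub (hp.const_mul (μ * ‖v‖ ^ 2 / 2))
    exact this.congr_deriv (by ring)
  have hhmono : MonotoneOn h (Set.Icc (0 : ℝ) 1) := by
    refine monotoneOn_of_deriv_nonneg (convex_Icc 0 1)
      (fun t _ => ((hh' t).differentiableAt).continuousAt.continuousWithinAt)
      (fun t _ => ((hh' t).differentiableAt).differentiableWithinAt) (fun t ht => ?_)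
    rw [(hh' t).deriv]
    have ht0 : 0 ≤ t := by
      rw [interior_Icc] at ht
      exact le_of_lt ht.1
    linarith [hφlb t ht0]
  have key := hhmono (Set.mem_Icc.mpr ⟨le_refl 0, zero_le_one⟩)
    (Set.mem_Icc.mpr ⟨zero_le_one, le_refl 1⟩) zero_le_one
  have hz0 : z 0 = xs := by simp [hzdef]
  have hz1 : z 1 = xk := by simp [hzdef, hv]
  simp only [hhdef, hgdef, hz0, hz1] at key
  have : ‖xk - xs‖ = ‖v‖ := by rw [hv]
  rw [this]
  push_cast at key
  nlinarith [key]


end Aux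

/-- Loewner sandwich between the averaged Hessian `G_k` along the segment to `x_*`
and the Hessian at intermediate points of the segment. -/
theorem hessian_on_segment_vs_averaged {d : ℕ}
    (f : EuclideanSpace ℝ (Fin d) → ℝ) (μ M : ℝ) (hμ : 0 < μ) (hM : 0 < M)
    (Hess : EuclideanSpace ℝ (Fin d) → Matrix (Fin d) (Fin d) ℝ)
    (hf : ContDiff ℝ 2 f)
    (hHess : ∀ x, HasFDerivAt (gradient f) (Matrix.toEuclideanCLM (𝕜 := ℝ) (Hess x)) x)
    (hsymm : ∀ x, (Hess x).IsHermitian)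
    (hstr : ∀ x, (Hess x - μ • (1 : Matrix (Fin d) (Fin d) ℝ)).PosSemidef)
    (hlipH : ∀ x y, ‖Hess x - Hess y‖ ≤ M * ‖x - y‖)
    (xs : EuclideanSpace ℝ (Fin d)) (hmin : ∀ y, f xs ≤ f y)
    (xk : EuclideanSpace ℝ (Fin d))
    (G : Matrix (Fin d) (Fin d) ℝ)
    (hG : G = ∫ τ in (0:ℝ)..1, Hess (xk + τ • (xs - xk)))
    (C : ℝ) (hC : C = (M / μ ^ ((3:ℝ)/2)) * Real.sqrt (2 * (f xk - f xs))) :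
    ∀ τ ∈ Set.Icc (0:ℝ) 1,
      (Hess (xk + τ • (xs - xk)) - (1 / (1 + C)) • G).PosSemidef ∧
      ((1 + C) • G - Hess (xk + τ • (xs - xk))).PosSemidef := by
  intro τ hτ
  set v := xs - xk with hv
  set z : ℝ → EuclideanSpace ℝ (Fin d) := fun s => xk + s • v with hzdef
  -- continuity of the Hessian along the segment
  have hHC : Continuous Hess := by
    have hl : LipschitzWith (Real.toNNReal M) Hess := by
      refine LipschitzWith.of_dist_le_mul fun x y => ?_
      rw [dist_eq_norm, dist_eq_norm]
      calc ‖Hess x - Hess y‖ ≤ M * ‖x - y‖ := hlipH x y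
        _ ≤ (Real.toNNReal M : ℝ) * ‖x - y‖ := by
            gcongr
            exact Real.le_coe_toNNReal M
    exact hl.continuous
  have hzc : Continuous z := by
    apply Continuous.add continuous_const
    exact continuous_id.smul continuous_const
  have hcont : Continuous fun s : ℝ => Hess (z s) := hHC.comp hzc
  have hint : IntervalIntegrable (fun s => Hess (z s)) MeasureTheory.volume 0 1 :=
    hcont.intervalIntegrable 0 1
  have hG' : G = ∫ s in (0:ℝ)..1, Hess (z s) := hG
  -- entries of G
  have hGentry : ∀ i j : Fin d, G i j = ∫ s in (0:ℝ)..1, Hess (z s) i j := by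
    intro i j
    let L : Matrix (Fin d) (Fin d) ℝ →ₗ[ℝ] ℝ :=
      { toFun := fun A => A i j
        map_add' := fun A B => rfl
        map_smul' := fun c A => rfl }
    have h := (LinearMap.toContinuousLinearMap L).intervalIntegral_comp_comm hint
    simp only [LinearMap.coe_toContinuousLinearMap'] at h
    rw [hG']
    exact (h).symm
  -- G is Hermitian
  have hGherm : G.IsHermitian := by
    refine Matrix.IsHermitian.ext fun i j => ?_
    rw [star_trivial, hGentry i j, hGentry j i]
    congr 1
    funext s
    have h := (hsymm (z s)).apply i j
    rw [star_trivial] at h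
    exact h
  -- quadratic form of G as an integral
  have qf : ∀ x : Fin d → ℝ,
      (dotProduct x (G *ᵥ x) = ∫ s in (0:ℝ)..1, dotProduct x (Hess (z s) *ᵥ x)) ∧
      Continuous fun s : ℝ => dotProduct x (Hess (z s) *ᵥ x) := by
    intro x
    let L : Matrix (Fin d) (Fin d) ℝ →ₗ[ℝ] ℝ :=
      { toFun := fun A => dotProduct x (A *ᵥ x)
        map_add' := fun A B => by simp [Matrix.add_mulVec, dotProduct_add]
        map_smul' := fun c A => by simp [Matrix.smul_mulVec, dotProduct_smul] }
    constructor
    · have h : (∫ s in (0:ℝ)..1, x ⬝ᵥ Hess (z s) *ᵥ x)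
          = x ⬝ᵥ (∫ s in (0:ℝ)..1, Hess (z s)) *ᵥ x :=
        (LinearMap.toContinuousLinearMap L).intervalIntegral_comp_comm hint
      rw [hG']
      exact h.symm
    · have h := (LinearMap.toContinuousLinearMap L).continuous.comp hcont
      exact h
  -- pointwise strong convexity bound on quadratic forms
  have hpt : ∀ (y : EuclideanSpace ℝ (Fin d)) (x : Fin d → ℝ),
      μ * dotProduct x x ≤ dotProduct x (Hess y *ᵥ x) := by
    intro y x
    have h := (hstr y).dotProduct_mulVec_nonneg x
    simp only [Matrix.sub_mulVec, Matrix.smul_mulVec, Matrix.one_mulVec,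
      dotProduct_sub, dotProduct_smul, star_trivial, smul_eq_mul,
      sub_nonneg] at h
    exact h
  -- G - μ•1 is PSD
  have herm1 : (μ • (1 : Matrix (Fin d) (Fin d) ℝ)).IsHermitian := by
    unfold Matrix.IsHermitian
    rw [Matrix.conjTranspose_smul, Matrix.conjTranspose_one]
    simp
  have hGmu : (G - μ • (1 : Matrix (Fin d) (Fin d) ℝ)).PosSemidef := by
    refine Matrix.PosSemidef.of_dotProduct_mulVec_nonneg (hGherm.sub herm1) fun x => ?_
    simp only [Matrix.sub_mulVec, Matrix.smul_mulVec, Matrix.one_mulVec,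
      dotProduct_sub, dotProduct_smul, star_trivial, smul_eq_mul,
      sub_nonneg]
    rw [(qf x).1]
    have hle : μ * dotProduct x x
        = ∫ s in (0:ℝ)..1, μ * dotProduct x x := by
      rw [intervalIntegral.integral_const]
      simp
    rw [hle]
    refine intervalIntegral.integral_mono_on zero_le_one intervalIntegrable_const
      ((qf x).2.intervalIntegrable 0 1) fun s _ => hpt (z s) x
  -- norm bound between Hess on segment and G
  have hΔ : 0 ≤ f xk - f xs := sub_nonneg.2 (hmin xk)
  have hsc := strong_convex_bound f μ hμ Hess hf hHess hstr xs xk hmin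
  have hsqμ : 0 < Real.sqrt μ := Real.sqrt_pos.2 hμ
  have hC0 : 0 ≤ C := by
    rw [hC]
    have : 0 < μ ^ ((3:ℝ)/2) := Real.rpow_pos_of_pos hμ _
    positivity
  have hμC : M * ‖v‖ ≤ μ * C := by
    have hvn : ‖v‖ = ‖xk - xs‖ := by rw [hv, norm_sub_rev]
    have hsq : Real.sqrt μ * ‖v‖ ≤ Real.sqrt (2 * (f xk - f xs)) := by
      have h1 : μ * ‖v‖ ^ 2 ≤ 2 * (f xk - f xs) := by rw [hvn]; nlinarith
      calc Real.sqrt μ * ‖v‖ = Real.sqrt (μ * ‖v‖ ^ 2) := by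
            rw [Real.sqrt_mul hμ.le, Real.sqrt_sq (norm_nonneg _)]
        _ ≤ Real.sqrt (2 * (f xk - f xs)) := Real.sqrt_le_sqrt h1
    have h32 : μ ^ ((3:ℝ)/2) = μ * Real.sqrt μ := by
      rw [show (3:ℝ)/2 = 1 + 1/2 by norm_num, Real.rpow_add hμ, Real.rpow_one,
        ← Real.sqrt_eq_rpow]
    have hμCeq : μ * C = M * Real.sqrt (2 * (f xk - f xs)) / Real.sqrt μ := by
      rw [hC, h32]
      field_simp
    rw [hμCeq, le_div_iff₀ hsqμ]
    calc M * ‖v‖ * Real.sqrt μ = M * (Real.sqrt μ * ‖v‖) := by ring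
      _ ≤ M * Real.sqrt (2 * (f xk - f xs)) := by
          exact mul_le_mul_of_nonneg_left hsq hM.le
  have hrepr : Hess (z τ) - G = ∫ s in (0:ℝ)..1, (Hess (z τ) - Hess (z s)) := by
    rw [intervalIntegral.integral_sub intervalIntegrable_const hint,
      intervalIntegral.integral_const, hG']
    simp
  have hbound : ‖Hess (z τ) - G‖ ≤ μ * C := by
    refine le_trans ?_ hμC
    rw [hrepr]
    have hb := intervalIntegral.norm_integral_le_of_norm_le_const
      (C := M * ‖v‖) (f := fun s => Hess (z τ) - Hess (z s)) (a := 0) (b := 1) ?_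
    · simpa using hb
    · intro s hs
      rw [Set.uIoc_of_le zero_le_one] at hs
      have h2 : z τ - z s = (τ - s) • v := by
        simp only [hzdef]
        rw [sub_smul]
        abel
      calc ‖Hess (z τ) - Hess (z s)‖ ≤ M * ‖z τ - z s‖ := hlipH _ _
        _ = M * (|τ - s| * ‖v‖) := by rw [h2, norm_smul]; simp [Real.norm_eq_abs]
        _ ≤ M * (1 * ‖v‖) := by
            refine mul_le_mul_of_nonneg_left (mul_le_mul_of_nonneg_right ?_ (norm_nonneg _)) hM.le
            rw [abs_le]
            constructor <;> [linarith [hτ.1, hτ.2, hs.1, hs.2]; linarith [hτ.1, hτ.2, hs.1, hs.2]]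
        _ = M * ‖v‖ := by ring
  -- PSD of the two shifted differences
  have hN1 : ((μ * C) • (1 : Matrix (Fin d) (Fin d) ℝ) + (Hess (z τ) - G)).PosSemidef :=
    psd_of_l2norm_le _ ((hsymm _).sub hGherm) hbound
  have hN2 : ((μ * C) • (1 : Matrix (Fin d) (Fin d) ℝ) + (G - Hess (z τ))).PosSemidef :=
    psd_of_l2norm_le _ (hGherm.sub (hsymm _)) (by rwa [norm_sub_rev] at hbound)
  have h1C : 0 < 1 + C := by linarith
  constructor
  · have e : (1 + C) • Hess (xk + τ • v) - G =
        C • (Hess (xk + τ • v) - μ • (1 : Matrix (Fin d) (Fin d) ℝ)) +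
          ((μ * C) • (1 : Matrix (Fin d) (Fin d) ℝ) + (Hess (xk + τ • v) - G)) := by
      module
    have hpsd : ((1 + C) • Hess (xk + τ • v) - G).PosSemidef := by
      rw [e]
      exact (smul_psd (hstr _) hC0).add hN1
    have e2 : Hess (xk + τ • v) - (1 / (1 + C)) • G
        = (1 / (1 + C)) • ((1 + C) • Hess (xk + τ • v) - G) := by
      match_scalars <;> field_simp
    rw [e2]
    exact smul_psd hpsd (by positivity)
  · have e : (1 + C) • G - Hess (xk + τ • v) =
        C • (G - μ • (1 : Matrix (Fin d) (Fin d) ℝ)) +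
          ((μ * C) • (1 : Matrix (Fin d) (Fin d) ℝ) + (G - Hess (xk + τ • v))) := by
      module
    rw [e]
    exact (smul_psd hGmu hC0).add hN2
end

section
/- Let B ∈ ℝ^{d×d} be symmetric positive definite, s, y ∈ ℝ^d with sᵀ y > 0 and s ≠ 0, and let B₊ = B - (B s sᵀ B)/(sᵀ B s) + (y yᵀ)/(sᵀ y) be the BFGS update. Define Ψ(A) = Tr(A) - log Det(A) - d, m = (sᵀ y)/‖s‖², and cos θ = (sᵀ B s)/(‖B s‖ ‖s‖). Then Ψ(B₊) ≤ Ψ(B) + ‖y‖²/(sᵀ y) - 1 + log(cos² θ / m). -/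
open Matrix

private lemma trace_vecMulVec' {d : ℕ} (u v : Fin d → ℝ) :
    (vecMulVec u v).trace = u ⬝ᵥ v := by
  simp [Matrix.trace, Matrix.vecMulVec_apply, dotProduct, Matrix.diag]

/-- One-step decrease of the potential `Ψ` along the BFGS update:
`Ψ(B₊) ≤ Ψ(B) + ‖y‖²/(sᵀy) - 1 + log(cos²θ/m)`. -/
theorem bfgs_potential_decrease {d : ℕ} (B : Matrix (Fin d) (Fin d) ℝ) (hB : B.PosDef)
    (s y : Fin d → ℝ) (hsy : 0 < s ⬝ᵥ y) (hs : s ≠ 0)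
    (Bplus : Matrix (Fin d) (Fin d) ℝ)
    (hBplus : Bplus = B - (1 / (s ⬝ᵥ B.mulVec s)) • vecMulVec (B.mulVec s) (B.vecMul s)
        + (1 / (s ⬝ᵥ y)) • vecMulVec y y)
    (m cosθ : ℝ) (hm : m = (s ⬝ᵥ y) / (s ⬝ᵥ s))
    (hcos : cosθ = (s ⬝ᵥ B.mulVec s) /
      (Real.sqrt (B.mulVec s ⬝ᵥ B.mulVec s) * Real.sqrt (s ⬝ᵥ s))) :
    Bplus.trace - Real.log Bplus.det - d ≤
      (B.trace - Real.log B.det - d) + (y ⬝ᵥ y) / (s ⬝ᵥ y) - 1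
        + Real.log (cosθ ^ 2 / m) := by
  set p := s ⬝ᵥ B.mulVec s with hp
  set q := s ⬝ᵥ y with hq
  have hT : Bᵀ = B := hB.1
  have hvec : B.vecMul s = B.mulVec s := by
    conv_lhs => rw [← hT]
    rw [Matrix.vecMul_transpose]
  have hp0 : 0 < p := by have := hB.dotProduct_mulVec_pos hs; simpa using this
  have hdet0 : IsUnit B.det := (hB.det_pos.ne').isUnit
  have hBBinv : B * B⁻¹ = 1 := Matrix.mul_nonsing_inv B hdet0
  have hBy : B *ᵥ (B⁻¹ *ᵥ y) = y := by
    rw [Matrix.mulVec_mulVec, hBBinv, Matrix.one_mulVec]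
  set z := B⁻¹ *ᵥ y with hz
  set w := B *ᵥ s with hw
  -- positivity facts
  have hwne : w ≠ 0 := by
    intro h
    rw [hp, h] at hp0
    simp at hp0
  have hr0 : 0 < w ⬝ᵥ w := by
    rcases lt_or_eq_of_le (Finset.sum_nonneg fun i _ => mul_self_nonneg (w i) :
        (0:ℝ) ≤ w ⬝ᵥ w) with h | h
    · exact h
    · exact absurd (dotProduct_self_eq_zero.mp h.symm) hwne
  have hn0 : 0 < s ⬝ᵥ s := by
    rcases lt_or_eq_of_le (Finset.sum_nonneg fun i _ => mul_self_nonneg (s i) :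
        (0:ℝ) ≤ s ⬝ᵥ s) with h | h
    · exact h
    · exact absurd (dotProduct_self_eq_zero.mp h.symm) hs
  -- determinant of the update
  set U : Matrix (Fin d) (Fin 2) ℝ := Matrix.of (fun i => ![-(s i) / p, z i / q]) with hU
  set V : Matrix (Fin 2) (Fin d) ℝ := Matrix.of ![w, y] with hV
  have hws : w ⬝ᵥ s = p := dotProduct_comm w s
  have hwz : w ⬝ᵥ z = q := by
    rw [← hvec, ← Matrix.dotProduct_mulVec, hBy]
  have hfact : Bplus = B * (1 + U * V) := by
    rw [Matrix.mul_add, Matrix.mul_one]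
    have hcol : ∀ k, (fun j => (U * V) j k) = (-(w k / p)) • s + (y k / q) • z := by
      intro k; funext j
      simp [Matrix.mul_apply, Fin.sum_univ_two, hU, hV, Pi.add_apply, Pi.smul_apply]
      ring
    have hmul : ∀ i k, (B * (U * V)) i k = (B *ᵥ (fun j => (U * V) j k)) i := by
      intro i k; simp [Matrix.mul_apply, Matrix.mulVec, dotProduct]
    rw [hBplus, hvec]
    ext i k
    simp only [Matrix.add_apply]
    rw [hmul i k, hcol k, Matrix.mulVec_add, Matrix.mulVec_smul,
      Matrix.mulVec_smul, hBy]
    simp [vecMulVec_apply, ← hw, ← hz]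
    ring
  have hVU : (1 + V * U).det = q / p := by
    have h00 : (V * U) 0 0 = -1 := by
      have : (V * U) 0 0 = w ⬝ᵥ (fun i => -(s i) / p) := by
        simp [Matrix.mul_apply, hU, hV, dotProduct]
      rw [this]
      have : (fun i => -(s i) / p) = (-(1/p)) • s := by funext i; simp; ring
      rw [this, dotProduct_smul, hws]
      rw [smul_eq_mul, neg_mul, one_div, inv_mul_cancel₀ hp0.ne']
    have h01 : (V * U) 0 1 = 1 := by
      have : (V * U) 0 1 = w ⬝ᵥ (fun i => z i / q) := by
        simp [Matrix.mul_apply, hU, hV, dotProduct]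
      rw [this]
      have : (fun i => z i / q) = (1/q) • z := by funext i; simp; ring
      rw [this, dotProduct_smul, hwz]
      rw [smul_eq_mul, one_div, inv_mul_cancel₀ hsy.ne']
    have h10 : (V * U) 1 0 = -(q / p) := by
      have : (V * U) 1 0 = y ⬝ᵥ (fun i => -(s i) / p) := by
        simp [Matrix.mul_apply, hU, hV, dotProduct]
      rw [this]
      have h2 : (fun i => -(s i) / p) = (-(1/p)) • s := by funext i; simp; ring
      rw [h2, dotProduct_smul, dotProduct_comm, ← hq]
      simp; ring
    rw [Matrix.det_fin_two]
    simp [Matrix.add_apply, Matrix.one_apply, h00, h01, h10]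
  have hdetBplus : Bplus.det = B.det * (q / p) := by
    rw [hfact, Matrix.det_mul, Matrix.det_one_add_mul_comm, hVU]
  -- trace of the update
  have htrace : Bplus.trace = B.trace - (w ⬝ᵥ w) / p + (y ⬝ᵥ y) / q := by
    rw [hBplus, hvec, Matrix.trace_add, Matrix.trace_sub, Matrix.trace_smul,
      Matrix.trace_smul, trace_vecMulVec', trace_vecMulVec']
    simp [← hw]
    ring
  -- log computations
  have hlogdet : Real.log Bplus.det = Real.log B.det + Real.log q - Real.log p := by
    rw [hdetBplus, Real.log_mul hB.det_pos.ne' (by positivity),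
      Real.log_div hsy.ne' hp0.ne']
    ring
  have hcos2 : cosθ ^ 2 / m = p ^ 2 / ((w ⬝ᵥ w) * q) := by
    rw [hcos, hm, div_pow, mul_pow, Real.sq_sqrt hr0.le, Real.sq_sqrt hn0.le]
    field_simp
  have hlogcos : Real.log (cosθ ^ 2 / m) =
      2 * Real.log p - Real.log (w ⬝ᵥ w) - Real.log q := by
    rw [hcos2, Real.log_div (by positivity) (by positivity),
      Real.log_mul hr0.ne' hsy.ne', Real.log_pow]
    push_cast
    ring
  have hkey : Real.log (w ⬝ᵥ w) - Real.log p ≤ (w ⬝ᵥ w) / p - 1 := by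
    have h1 := Real.log_le_sub_one_of_pos (show (0:ℝ) < (w ⬝ᵥ w) / p by positivity)
    rwa [Real.log_div hr0.ne' hp0.ne'] at h1
  rw [htrace, hlogdet, hlogcos]
  linarith
end

section
/- Let f : ℝ^d → ℝ be twice continuously differentiable and μ-strongly convex with minimizer x_* and M-Lipschitz Hessian. Let C = (M/μ^{3/2})√(2(f(x) - f(x_*))) and G = ∫_0^1 ∇²f(x + τ(x_* - x)) dτ for a point x ∈ ℝ^d. Then ∇f(x) = G (x - x_*), and there exists τ̃ ∈ [0,1] such that f(x) - f(x_*) = (1/2) ∇f(x)ᵀ G^{-1} ∇²f(x + τ̃(x_* - x)) G^{-1} ∇f(x) ≤ ((1+C)²/2) ∇f(x)ᵀ (∇²f(x_*))^{-1} ∇f(x). -/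
open scoped InnerProductSpace Matrix.Norms.L2Operator

section SuboptHelpers

variable {d : ℕ}

/-- Applying `toEuclideanCLM` to a fixed vector, as a CLM on matrices. -/
noncomputable def subopt_evalT (v : EuclideanSpace ℝ (Fin d)) :
    Matrix (Fin d) (Fin d) ℝ →L[ℝ] EuclideanSpace ℝ (Fin d) :=
  LinearMap.toContinuousLinearMap
    { toFun := fun A => Matrix.toEuclideanCLM (𝕜 := ℝ) A v
      map_add' := by intros; simp
      map_smul' := by intros; simp }

@[simp] lemma subopt_evalT_apply (v : EuclideanSpace ℝ (Fin d)) (A : Matrix (Fin d) (Fin d) ℝ) :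
    subopt_evalT v A = Matrix.toEuclideanCLM (𝕜 := ℝ) A v := rfl

lemma subopt_inner_eq_dot (A : Matrix (Fin d) (Fin d) ℝ) (v w : EuclideanSpace ℝ (Fin d)) :
    ⟪v, Matrix.toEuclideanCLM (𝕜 := ℝ) A w⟫_ℝ
      = dotProduct (WithLp.equiv 2 _ v) (Matrix.mulVec A (WithLp.equiv 2 _ w)) := by
  rw [EuclideanSpace.inner_eq_star_dotProduct]
  simp [Matrix.ofLp_toEuclideanCLM, dotProduct_comm]

lemma subopt_symm {A : Matrix (Fin d) (Fin d) ℝ} (hA : A.IsHermitian)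
    (v w : EuclideanSpace ℝ (Fin d)) :
    ⟪Matrix.toEuclideanCLM (𝕜 := ℝ) A v, w⟫_ℝ = ⟪v, Matrix.toEuclideanCLM (𝕜 := ℝ) A w⟫_ℝ := by
  have := (Matrix.isHermitian_iff_isSymmetric.mp hA) v w
  exact this

lemma subopt_qpos {A : Matrix (Fin d) (Fin d) ℝ} {μ : ℝ}
    (h : (A - μ • (1 : Matrix (Fin d) (Fin d) ℝ)).PosSemidef) (v : EuclideanSpace ℝ (Fin d)) :
    μ * ‖v‖ ^ 2 ≤ ⟪v, Matrix.toEuclideanCLM (𝕜 := ℝ) A v⟫_ℝ := by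
  have h2 := h.dotProduct_mulVec_nonneg (WithLp.equiv 2 _ v)
  rw [star_trivial, ← subopt_inner_eq_dot, map_sub] at h2
  have hone : Matrix.toEuclideanCLM (𝕜 := ℝ)
      ((μ:ℝ) • (1 : Matrix (Fin d) (Fin d) ℝ)) v = μ • v := by
    rw [map_smul, map_one]; rfl
  rw [ContinuousLinearMap.sub_apply, hone, inner_sub_right, real_inner_smul_right,
    real_inner_self_eq_norm_sq] at h2
  linarith

lemma subopt_posDef {A : Matrix (Fin d) (Fin d) ℝ} {μ : ℝ} (hμ : 0 < μ) (hA : A.IsHermitian)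
    (h : ∀ v : EuclideanSpace ℝ (Fin d),
      μ * ‖v‖ ^ 2 ≤ ⟪v, Matrix.toEuclideanCLM (𝕜 := ℝ) A v⟫_ℝ) : A.PosDef := by
  refine Matrix.PosDef.of_dotProduct_mulVec_pos hA fun y hy => ?_
  set v : EuclideanSpace ℝ (Fin d) := (WithLp.equiv 2 _).symm y with hv
  have hvy : WithLp.equiv 2 _ v = y := by simp [hv]
  have hb := subopt_inner_eq_dot A v v
  rw [hvy] at hb
  rw [star_trivial, ← hb]
  have hv0 : v ≠ 0 := by simpa [hv] using hy
  have h1 : (0:ℝ) < ‖v‖ ^ 2 := pow_pos (norm_pos_iff.mpr hv0) 2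
  nlinarith [h v]

/-- quadratic form bounded by operator norm . -/
lemma subopt_quad_le (D : Matrix (Fin d) (Fin d) ℝ) (v : EuclideanSpace ℝ (Fin d)) :
    ⟪v, Matrix.toEuclideanCLM (𝕜 := ℝ) D v⟫_ℝ ≤ ‖D‖ * ‖v‖ ^ 2 := by
  have h1 := real_inner_le_norm v (Matrix.toEuclideanCLM (𝕜 := ℝ) D v)
  have h2 := (Matrix.toEuclideanCLM (𝕜 := ℝ) D).le_opNorm v
  have h3 : ‖Matrix.toEuclideanCLM (𝕜 := ℝ) D‖ = ‖D‖ := rfl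
  nlinarith [norm_nonneg v, norm_nonneg (Matrix.toEuclideanCLM (𝕜 := ℝ) D v)]

/-- Second-order Taylor with Lagrange remainder on `[0,1]`, via Rolle. -/
lemma subopt_taylor2 (φ φ' φ'' : ℝ → ℝ)
    (h1 : ∀ t, HasDerivAt φ (φ' t) t) (h2 : ∀ t, HasDerivAt φ' (φ'' t) t) :
    ∃ ξ ∈ Set.Ioo (0:ℝ) 1, φ 1 = φ 0 + φ' 0 + φ'' ξ / 2 := by
  set A : ℝ := 2 * (φ 1 - φ 0 - φ' 0) with hA
  set g : ℝ → ℝ := fun t => φ 1 - φ t - (1 - t) * φ' t - A * (1 - t) ^ 2 / 2 with hg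
  have hg' : ∀ t, HasDerivAt g ((1 - t) * (A - φ'' t)) t := by
    intro t
    have ha : HasDerivAt (fun s : ℝ => (1 - s) * φ' s)
        ((0 - 1) * φ' t + (1 - t) * φ'' t) t :=
      ((hasDerivAt_const t (1:ℝ)).sub (hasDerivAt_id t)).mul (h2 t)
    have hb : HasDerivAt (fun s : ℝ => A * (1 - s) ^ 2 / 2)
        (A * ((2:ℕ) * (1 - t) ^ (2-1) * (0 - 1)) / 2) t :=
      ((((hasDerivAt_const t (1:ℝ)).sub (hasDerivAt_id t)).pow 2).const_mul A).div_const 2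
    have := (((hasDerivAt_const t (φ 1)).sub (h1 t)).sub ha).sub hb
    refine this.congr_deriv ?_
    push_cast
    ring
  have hg0 : g 0 = 0 := by simp [hg, hA]
  have hg1 : g 1 = 0 := by simp [hg]
  obtain ⟨ξ, hξ, hz⟩ := exists_hasDerivAt_eq_zero (f := g)
    (f' := fun t => (1 - t) * (A - φ'' t)) one_pos
    (fun t _ => (hg' t).continuousAt.continuousWithinAt) (hg0.trans hg1.symm)
    (fun t _ => hg' t)
  refine ⟨ξ, hξ, ?_⟩
  have hne : (1 - ξ) ≠ 0 := by have := hξ.2; intro h; linarith [sub_eq_zero.mp h]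
  have hAe : φ'' ξ = A := by
    rcases mul_eq_zero.mp hz with h | h
    · exact absurd h hne
    · linarith [sub_eq_zero.mp h]
  rw [hAe, hA]; ring

end SuboptHelpers

set_option maxHeartbeats 1000000 in
/-- FTC identity `∇f(x) = G (x - x_*)` and the Taylor/Lagrange representation
`f(x) - f(x_*) = (1/2) ∇f(x)ᵀ G⁻¹ ∇²f(x + τ̃(x_* - x)) G⁻¹ ∇f(x)`, together with
the bound by `((1+C)²/2) ∇f(x)ᵀ (∇²f(x_*))⁻¹ ∇f(x)`. -/
theorem suboptimality_representation {d : ℕ}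
    (f : EuclideanSpace ℝ (Fin d) → ℝ) (μ M : ℝ) (hμ : 0 < μ) (hM : 0 < M)
    (Hess : EuclideanSpace ℝ (Fin d) → Matrix (Fin d) (Fin d) ℝ)
    (hf : ContDiff ℝ 2 f)
    (hHess : ∀ z, HasFDerivAt (gradient f) (Matrix.toEuclideanCLM (𝕜 := ℝ) (Hess z)) z)
    (hsymm : ∀ z, (Hess z).IsHermitian)
    (hstr : ∀ z, (Hess z - μ • (1 : Matrix (Fin d) (Fin d) ℝ)).PosSemidef)
    (hlipH : ∀ z w, ‖Hess z - Hess w‖ ≤ M * ‖z - w‖)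
    (xs : EuclideanSpace ℝ (Fin d)) (hmin : ∀ y, f xs ≤ f y)
    (x : EuclideanSpace ℝ (Fin d))
    (G : Matrix (Fin d) (Fin d) ℝ)
    (hG : G = ∫ τ in (0:ℝ)..1, Hess (x + τ • (xs - x)))
    (C : ℝ) (hC : C = (M / μ ^ ((3:ℝ)/2)) * Real.sqrt (2 * (f x - f xs))) :
    gradient f x = Matrix.toEuclideanCLM (𝕜 := ℝ) G (x - xs) ∧
    ∃ τ ∈ Set.Icc (0:ℝ) 1,
      f x - f xs = (1 / 2) * ⟪gradient f x,
          Matrix.toEuclideanCLM (𝕜 := ℝ) G⁻¹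
            (Matrix.toEuclideanCLM (𝕜 := ℝ) (Hess (x + τ • (xs - x)))
              (Matrix.toEuclideanCLM (𝕜 := ℝ) G⁻¹ (gradient f x)))⟫_ℝ ∧
      f x - f xs ≤ ((1 + C) ^ 2 / 2) * ⟪gradient f x,
          Matrix.toEuclideanCLM (𝕜 := ℝ) (Hess xs)⁻¹ (gradient f x)⟫_ℝ := by
  have hdf : Differentiable ℝ f := hf.differentiable two_ne_zero
  -- gradient vanishes at the minimizer
  have hgrad0 : gradient f xs = 0 := by
    have hloc : IsLocalMin f xs := Filter.Eventually.of_forall hmin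
    have hfd : fderiv ℝ f xs = 0 := hloc.fderiv_eq_zero
    show (InnerProductSpace.toDual ℝ _).symm (fderiv ℝ f xs) = 0
    rw [hfd, map_zero]
  -- continuity of the Hessian
  have hHc : Continuous Hess := by
    refine (LipschitzWith.of_dist_le_mul (K := M.toNNReal) fun z w => ?_).continuous
    rw [dist_eq_norm, dist_eq_norm, Real.coe_toNNReal _ hM.le]
    exact hlipH z w
  -- the path from x to xs
  set p : ℝ → EuclideanSpace ℝ (Fin d) := fun τ => x + τ • (xs - x) with hp
  have hpc : Continuous p := by
    apply continuous_const.add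
    exact continuous_id.smul continuous_const
  have hhc : Continuous (fun τ => Hess (p τ)) := hHc.comp hpc
  have hpderiv : ∀ τ : ℝ, HasDerivAt p (xs - x) τ := by
    intro τ
    have : HasDerivAt (fun t : ℝ => x + t • (xs - x)) ((1:ℝ) • (xs - x)) τ :=
      ((hasDerivAt_id τ).smul_const (xs - x)).const_add x
    simpa [hp] using this
  have hp0 : p 0 = x := by simp [hp]
  have hp1 : p 1 = xs := by simp [hp]
  -- FTC for the gradient along the path
  have hderiv : ∀ τ : ℝ, HasDerivAt (fun t => gradient f (p t))
      (Matrix.toEuclideanCLM (𝕜 := ℝ) (Hess (p τ)) (xs - x)) τ :=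
    fun τ => (hHess (p τ)).comp_hasDerivAt τ (hpderiv τ)
  have hintc : Continuous (fun τ => Matrix.toEuclideanCLM (𝕜 := ℝ) (Hess (p τ)) (xs - x)) :=
    ((subopt_evalT (xs - x)).continuous.comp hhc).congr fun τ => subopt_evalT_apply _ _
  have hFTC : ∫ τ in (0:ℝ)..1, Matrix.toEuclideanCLM (𝕜 := ℝ) (Hess (p τ)) (xs - x)
      = gradient f (p 1) - gradient f (p 0) :=
    intervalIntegral.integral_eq_sub_of_hasDerivAt (fun t _ => hderiv t)
      (hintc.intervalIntegrable 0 1)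
  -- commuting toEuclideanCLM/evaluation with the integral
  have hGapply : ∀ v : EuclideanSpace ℝ (Fin d),
      Matrix.toEuclideanCLM (𝕜 := ℝ) G v
        = ∫ τ in (0:ℝ)..1, Matrix.toEuclideanCLM (𝕜 := ℝ) (Hess (p τ)) v := by
    intro v
    have := ContinuousLinearMap.intervalIntegral_comp_comm (μ := MeasureTheory.volume)
      (subopt_evalT v) (hhc.intervalIntegrable 0 1)
    rw [hG]
    simpa using this.symm
  -- part 1 : ∇f(x) = G (x - xs)
  have part1 : gradient f x = Matrix.toEuclideanCLM (𝕜 := ℝ) G (x - xs) := by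
    have h1 : Matrix.toEuclideanCLM (𝕜 := ℝ) G (xs - x) = 0 - gradient f x := by
      rw [hGapply (xs - x), hFTC, hp1, hp0, hgrad0]
    have h2 : x - xs = -(xs - x) := by abel
    rw [h2, map_neg, h1]
    abel
  -- inner products against G as integrals
  have hinner : ∀ v w : EuclideanSpace ℝ (Fin d),
      ⟪v, Matrix.toEuclideanCLM (𝕜 := ℝ) G w⟫_ℝ
        = ∫ τ in (0:ℝ)..1, ⟪v, Matrix.toEuclideanCLM (𝕜 := ℝ) (Hess (p τ)) w⟫_ℝ := by
    intro v w
    have hcont : Continuous (fun τ => Matrix.toEuclideanCLM (𝕜 := ℝ) (Hess (p τ)) w) :=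
      ((subopt_evalT w).continuous.comp hhc).congr fun τ => subopt_evalT_apply _ _
    have := ContinuousLinearMap.intervalIntegral_comp_comm (μ := MeasureTheory.volume)
      (innerSL ℝ v) (hcont.intervalIntegrable 0 1)
    rw [hGapply w]
    simpa using this.symm
  have hqcont : ∀ v : EuclideanSpace ℝ (Fin d),
      Continuous (fun τ => ⟪v, Matrix.toEuclideanCLM (𝕜 := ℝ) (Hess (p τ)) v⟫_ℝ) := by
    intro v
    exact (innerSL ℝ v).continuous.comp (((subopt_evalT v).continuous.comp hhc).congr fun τ => subopt_evalT_apply _ _)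
  -- lower bounds for the quadratic forms
  have qlow : ∀ z (v : EuclideanSpace ℝ (Fin d)),
      μ * ‖v‖ ^ 2 ≤ ⟪v, Matrix.toEuclideanCLM (𝕜 := ℝ) (Hess z) v⟫_ℝ :=
    fun z v => subopt_qpos (hstr z) v
  have qpos0 : ∀ z (v : EuclideanSpace ℝ (Fin d)),
      0 ≤ ⟪v, Matrix.toEuclideanCLM (𝕜 := ℝ) (Hess z) v⟫_ℝ := by
    intro z v
    refine le_trans ?_ (qlow z v)
    positivity
  have Glow : ∀ v : EuclideanSpace ℝ (Fin d),
      μ * ‖v‖ ^ 2 ≤ ⟪v, Matrix.toEuclideanCLM (𝕜 := ℝ) G v⟫_ℝ := by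
    intro v
    rw [hinner v v]
    have hconst : μ * ‖v‖ ^ 2 = ∫ _ in (0:ℝ)..1, μ * ‖v‖ ^ 2 := by simp
    rw [hconst]
    refine intervalIntegral.integral_mono_on zero_le_one
      (intervalIntegrable_const) ((hqcont v).intervalIntegrable 0 1) ?_
    intro τ _
    exact qlow (p τ) v
  have Gpos0 : ∀ v : EuclideanSpace ℝ (Fin d),
      0 ≤ ⟪v, Matrix.toEuclideanCLM (𝕜 := ℝ) G v⟫_ℝ := by
    intro v
    refine le_trans ?_ (Glow v)
    positivity
  -- G is symmetric / Hermitian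
  have hGsym : ∀ v w : EuclideanSpace ℝ (Fin d),
      ⟪Matrix.toEuclideanCLM (𝕜 := ℝ) G v, w⟫_ℝ = ⟪v, Matrix.toEuclideanCLM (𝕜 := ℝ) G w⟫_ℝ := by
    intro v w
    rw [real_inner_comm w (Matrix.toEuclideanCLM (𝕜 := ℝ) G v), hinner w v, hinner v w]
    refine intervalIntegral.integral_congr fun τ _ => ?_
    rw [← subopt_symm (hsymm (p τ)) v w, real_inner_comm]
  have hGherm : G.IsHermitian := by
    rw [Matrix.isHermitian_iff_isSymmetric]
    intro v w
    have := hGsym v w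
    exact this
  -- positive definiteness and invertibility
  have hGpd : G.PosDef := subopt_posDef hμ hGherm Glow
  have hHpd : (Hess xs).PosDef := subopt_posDef hμ (hsymm xs) (qlow xs)
  have hGdet : IsUnit G.det := isUnit_iff_ne_zero.mpr hGpd.det_pos.ne'
  have hHdet : IsUnit (Hess xs).det := isUnit_iff_ne_zero.mpr hHpd.det_pos.ne'
  have TGinv : ∀ v : EuclideanSpace ℝ (Fin d),
      Matrix.toEuclideanCLM (𝕜 := ℝ) G⁻¹ (Matrix.toEuclideanCLM (𝕜 := ℝ) G v) = v := by
    intro v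
    rw [← ContinuousLinearMap.mul_apply, ← map_mul, Matrix.nonsing_inv_mul G hGdet, map_one,
      ContinuousLinearMap.one_apply]
  have THinv : ∀ v : EuclideanSpace ℝ (Fin d),
      Matrix.toEuclideanCLM (𝕜 := ℝ) (Hess xs)
        (Matrix.toEuclideanCLM (𝕜 := ℝ) (Hess xs)⁻¹ v) = v := by
    intro v
    rw [← ContinuousLinearMap.mul_apply, ← map_mul, Matrix.mul_nonsing_inv _ hHdet, map_one,
      ContinuousLinearMap.one_apply]
  -- Taylor expansion around xs evaluated at x
  set u₀ : EuclideanSpace ℝ (Fin d) := x - xs with hu₀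
  set q : ℝ → EuclideanSpace ℝ (Fin d) := fun t => xs + t • u₀ with hqdef
  have hqderiv : ∀ t : ℝ, HasDerivAt q u₀ t := by
    intro t
    have : HasDerivAt (fun s : ℝ => xs + s • u₀) ((1:ℝ) • u₀) t :=
      ((hasDerivAt_id t).smul_const u₀).const_add xs
    simpa [hqdef] using this
  have hφ' : ∀ t : ℝ, HasDerivAt (fun s => f (q s)) (⟪u₀, gradient f (q t)⟫_ℝ) t := by
    intro t
    have h1 : HasDerivAt (fun s => f (q s)) (fderiv ℝ f (q t) u₀) t :=
      (hdf (q t)).hasFDerivAt.comp_hasDerivAt t (hqderiv t)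
    have h2 : fderiv ℝ f (q t) u₀ = ⟪gradient f (q t), u₀⟫_ℝ := by
      have : fderiv ℝ f (q t) = InnerProductSpace.toDual ℝ _ (gradient f (q t)) :=
        ((InnerProductSpace.toDual ℝ _).apply_symm_apply (fderiv ℝ f (q t))).symm
      rw [this, InnerProductSpace.toDual_apply_apply]
    rw [real_inner_comm]
    rwa [h2] at h1
  have hφ'' : ∀ t : ℝ, HasDerivAt (fun s => ⟪u₀, gradient f (q s)⟫_ℝ)
      (⟪u₀, Matrix.toEuclideanCLM (𝕜 := ℝ) (Hess (q t)) u₀⟫_ℝ) t := by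
    intro t
    have h1 : HasDerivAt (fun s => gradient f (q s))
        (Matrix.toEuclideanCLM (𝕜 := ℝ) (Hess (q t)) u₀) t :=
      (hHess (q t)).comp_hasDerivAt t (hqderiv t)
    exact (innerSL ℝ u₀).hasFDerivAt.comp_hasDerivAt t h1
  obtain ⟨ξ, hξ, hTay⟩ := subopt_taylor2 (fun s => f (q s))
    (fun t => ⟪u₀, gradient f (q t)⟫_ℝ)
    (fun t => ⟪u₀, Matrix.toEuclideanCLM (𝕜 := ℝ) (Hess (q t)) u₀⟫_ℝ) hφ' hφ''
  have hq0 : q 0 = xs := by simp [hqdef]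
  have hq1 : q 1 = x := by simp [hqdef, hu₀]
  have hδ : f x - f xs = ⟪u₀, Matrix.toEuclideanCLM (𝕜 := ℝ) (Hess (q ξ)) u₀⟫_ℝ / 2 := by
    have := hTay
    rw [hq0, hq1, hgrad0, inner_zero_right] at this
    linarith
  -- the Taylor point lies on the path p
  set τ₀ : ℝ := 1 - ξ with hτ₀
  have hqp : q ξ = p τ₀ := by
    rw [hqdef, hp, hτ₀, hu₀]
    module
  have hτmem : τ₀ ∈ Set.Icc (0:ℝ) 1 := ⟨by linarith [hξ.2], by linarith [hξ.1]⟩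
  rw [hqp] at hδ
  -- strong convexity lower bound on the gap, and c₀ ≤ C
  have hδlow : μ / 2 * ‖u₀‖ ^ 2 ≤ f x - f xs := by
    have := qlow (p τ₀) u₀
    rw [hδ]
    linarith
  have hδ0 : 0 ≤ f x - f xs := le_trans (by positivity) hδlow
  set c₀ : ℝ := M * ‖u₀‖ / μ with hc₀
  have hc₀0 : 0 ≤ c₀ := by positivity
  have hC0 : 0 ≤ C := by
    rw [hC]
    have : (0:ℝ) ≤ M / μ ^ ((3:ℝ)/2) := by positivity
    positivity
  have hc₀C : c₀ ≤ C := by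
    have hsqμ : 0 < Real.sqrt μ := Real.sqrt_pos.mpr hμ
    have h32 : μ ^ ((3:ℝ)/2) = μ * Real.sqrt μ := by
      rw [show (3:ℝ)/2 = 1 + 1/2 by norm_num, Real.rpow_add hμ, Real.rpow_one,
        ← Real.sqrt_eq_rpow]
    have hs : Real.sqrt μ * ‖u₀‖ ≤ Real.sqrt (2 * (f x - f xs)) := by
      have h1 : μ * ‖u₀‖ ^ 2 ≤ 2 * (f x - f xs) := by linarith
      have h2 : Real.sqrt (μ * ‖u₀‖ ^ 2) = Real.sqrt μ * ‖u₀‖ := by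
        rw [Real.sqrt_mul hμ.le, Real.sqrt_sq (norm_nonneg _)]
      rw [← h2]
      exact Real.sqrt_le_sqrt h1
    rw [hC, h32, hc₀]
    have h3 : M / (μ * Real.sqrt μ) * (Real.sqrt μ * ‖u₀‖) = M * ‖u₀‖ / μ := by
      field_simp
    calc M * ‖u₀‖ / μ = M / (μ * Real.sqrt μ) * (Real.sqrt μ * ‖u₀‖) := h3.symm
      _ ≤ M / (μ * Real.sqrt μ) * Real.sqrt (2 * (f x - f xs)) := by
          refine mul_le_mul_of_nonneg_left hs ?_
          positivity
  -- pointwise Loewner comparison along the path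
  have hcomp : ∀ a ∈ Set.Icc (0:ℝ) 1, ∀ b ∈ Set.Icc (0:ℝ) 1,
      ∀ v : EuclideanSpace ℝ (Fin d),
      ⟪v, Matrix.toEuclideanCLM (𝕜 := ℝ) (Hess (p a)) v⟫_ℝ
        ≤ (1 + c₀) * ⟪v, Matrix.toEuclideanCLM (𝕜 := ℝ) (Hess (p b)) v⟫_ℝ := by
    intro a ha b hb v
    have hdiff : ⟪v, Matrix.toEuclideanCLM (𝕜 := ℝ) (Hess (p a)) v⟫_ℝ
        - ⟪v, Matrix.toEuclideanCLM (𝕜 := ℝ) (Hess (p b)) v⟫_ℝ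
        = ⟪v, Matrix.toEuclideanCLM (𝕜 := ℝ) (Hess (p a) - Hess (p b)) v⟫_ℝ := by
      rw [map_sub, ContinuousLinearMap.sub_apply, inner_sub_right]
    have hnd : ‖Hess (p a) - Hess (p b)‖ ≤ M * ‖u₀‖ := by
      refine le_trans (hlipH (p a) (p b)) ?_
      have hsub : p a - p b = (a - b) • (xs - x) := by
        simp only [hp]; module
      have hn : ‖xs - x‖ = ‖u₀‖ := by rw [hu₀, norm_sub_rev]
      rw [hsub, norm_smul, hn]
      have hab : |a - b| ≤ 1 := by
        rw [abs_le]
        constructor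
        · linarith [ha.1, hb.2]
        · linarith [ha.2, hb.1]
      have := mul_le_mul_of_nonneg_right hab (norm_nonneg (u₀ : EuclideanSpace ℝ (Fin d)))
      rw [Real.norm_eq_abs]
      nlinarith [norm_nonneg (u₀ : EuclideanSpace ℝ (Fin d)), hM.le]
    have f1 : ⟪v, Matrix.toEuclideanCLM (𝕜 := ℝ) (Hess (p a) - Hess (p b)) v⟫_ℝ
        ≤ M * ‖u₀‖ * ‖v‖ ^ 2 :=
      le_trans (subopt_quad_le _ v) (mul_le_mul_of_nonneg_right hnd (sq_nonneg _))
    have f2 : M * ‖u₀‖ * ‖v‖ ^ 2 = c₀ * (μ * ‖v‖ ^ 2) := by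
      rw [hc₀]; field_simp
    have f3 : c₀ * (μ * ‖v‖ ^ 2)
        ≤ c₀ * ⟪v, Matrix.toEuclideanCLM (𝕜 := ℝ) (Hess (p b)) v⟫_ℝ :=
      mul_le_mul_of_nonneg_left (qlow (p b) v) hc₀0
    have f4 : (1 + c₀) * ⟪v, Matrix.toEuclideanCLM (𝕜 := ℝ) (Hess (p b)) v⟫_ℝ
        = ⟪v, Matrix.toEuclideanCLM (𝕜 := ℝ) (Hess (p b)) v⟫_ℝ
          + c₀ * ⟪v, Matrix.toEuclideanCLM (𝕜 := ℝ) (Hess (p b)) v⟫_ℝ := by ring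
    linarith
  -- integrated comparison against G
  have hcompG : ∀ a ∈ Set.Icc (0:ℝ) 1, ∀ v : EuclideanSpace ℝ (Fin d),
      ⟪v, Matrix.toEuclideanCLM (𝕜 := ℝ) (Hess (p a)) v⟫_ℝ
        ≤ (1 + c₀) * ⟪v, Matrix.toEuclideanCLM (𝕜 := ℝ) G v⟫_ℝ := by
    intro a ha v
    rw [hinner v v, ← intervalIntegral.integral_const_mul]
    have hconst : ⟪v, Matrix.toEuclideanCLM (𝕜 := ℝ) (Hess (p a)) v⟫_ℝ
        = ∫ _ in (0:ℝ)..1, ⟪v, Matrix.toEuclideanCLM (𝕜 := ℝ) (Hess (p a)) v⟫_ℝ := by simp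
    rw [hconst]
    refine intervalIntegral.integral_mono_on zero_le_one intervalIntegrable_const
      ((continuous_const.mul (hqcont v)).intervalIntegrable 0 1) ?_
    intro b hb
    exact hcomp a ha b hb v
  -- notation for the final assembly
  set g : EuclideanSpace ℝ (Fin d) := gradient f x with hgdef
  set w : EuclideanSpace ℝ (Fin d) := Matrix.toEuclideanCLM (𝕜 := ℝ) (Hess xs)⁻¹ g with hwdef
  have hu : Matrix.toEuclideanCLM (𝕜 := ℝ) G⁻¹ g = u₀ := by
    rw [part1]; exact TGinv u₀
  have hgu : ⟪u₀, g⟫_ℝ = ⟪u₀, Matrix.toEuclideanCLM (𝕜 := ℝ) G u₀⟫_ℝ := by rw [part1]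
  have hGinvherm : (G⁻¹).IsHermitian := hGherm.inv
  have hpτ : x + τ₀ • (xs - x) = p τ₀ := rfl
  -- the equality clause
  have heq : f x - f xs = (1 / 2) * ⟪g,
      Matrix.toEuclideanCLM (𝕜 := ℝ) G⁻¹
        (Matrix.toEuclideanCLM (𝕜 := ℝ) (Hess (x + τ₀ • (xs - x)))
          (Matrix.toEuclideanCLM (𝕜 := ℝ) G⁻¹ g))⟫_ℝ := by
    rw [hpτ, hu, ← subopt_symm hGinvherm, hu, hδ]
    ring
  -- the inequality clause
  have hqf0 : 0 ≤ ⟪u₀, g⟫_ℝ := by rw [hgu]; exact Gpos0 u₀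
  have A3 : f x - f xs ≤ (1 + C) / 2 * ⟪u₀, g⟫_ℝ := by
    have t1 := hcompG τ₀ hτmem u₀
    have t2 : (1 + c₀) * ⟪u₀, Matrix.toEuclideanCLM (𝕜 := ℝ) G u₀⟫_ℝ
        ≤ (1 + C) * ⟪u₀, Matrix.toEuclideanCLM (𝕜 := ℝ) G u₀⟫_ℝ :=
      mul_le_mul_of_nonneg_right (by linarith) (Gpos0 u₀)
    rw [hδ, hgu]
    linarith
  have hcxs : ⟪u₀, Matrix.toEuclideanCLM (𝕜 := ℝ) (Hess xs) u₀⟫_ℝ ≤ (1 + C) * ⟪u₀, g⟫_ℝ := by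
    have t1 := hcompG 1 ⟨zero_le_one, le_refl 1⟩ u₀
    rw [hp1] at t1
    have t2 : (1 + c₀) * ⟪u₀, Matrix.toEuclideanCLM (𝕜 := ℝ) G u₀⟫_ℝ
        ≤ (1 + C) * ⟪u₀, Matrix.toEuclideanCLM (𝕜 := ℝ) G u₀⟫_ℝ :=
      mul_le_mul_of_nonneg_right (by linarith) (Gpos0 u₀)
    rw [hgu]
    linarith
  have ha : (0:ℝ) < 1 + C := by linarith
  -- key inverse-monotonicity step
  have A4 : ⟪u₀, g⟫_ℝ ≤ (1 + C) * ⟪w, g⟫_ℝ := by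
    set r : EuclideanSpace ℝ (Fin d) := (1/(1+C)) • u₀ - w with hr
    have h0 : 0 ≤ ⟪r, Matrix.toEuclideanCLM (𝕜 := ℝ) (Hess xs) r⟫_ℝ := qpos0 xs r
    have hTHw : Matrix.toEuclideanCLM (𝕜 := ℝ) (Hess xs) w = g := by
      rw [hwdef]; exact THinv g
    have hcross : ⟪w, Matrix.toEuclideanCLM (𝕜 := ℝ) (Hess xs) u₀⟫_ℝ = ⟪u₀, g⟫_ℝ := by
      rw [real_inner_comm _ w, subopt_symm (hsymm xs), hTHw]
    have hcross2 : ⟪u₀, Matrix.toEuclideanCLM (𝕜 := ℝ) (Hess xs) w⟫_ℝ = ⟪u₀, g⟫_ℝ := by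
      rw [hTHw]
    have hww : ⟪w, Matrix.toEuclideanCLM (𝕜 := ℝ) (Hess xs) w⟫_ℝ = ⟪w, g⟫_ℝ := by
      rw [hTHw]
    have e1 : ⟪r, Matrix.toEuclideanCLM (𝕜 := ℝ) (Hess xs) r⟫_ℝ
        = (1/(1+C))^2 * ⟪u₀, Matrix.toEuclideanCLM (𝕜 := ℝ) (Hess xs) u₀⟫_ℝ
          - 2 * (1/(1+C)) * ⟪u₀, g⟫_ℝ + ⟪w, g⟫_ℝ := by
      rw [hr, map_sub, map_smul, inner_sub_left, inner_sub_right, inner_sub_right,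
        real_inner_smul_left, real_inner_smul_left, real_inner_smul_right,
        real_inner_smul_right, hcross, hcross2, hww]
      ring
    have e2 : (1/(1+C))^2 * ⟪u₀, Matrix.toEuclideanCLM (𝕜 := ℝ) (Hess xs) u₀⟫_ℝ
        ≤ (1/(1+C))^2 * ((1 + C) * ⟪u₀, g⟫_ℝ) :=
      mul_le_mul_of_nonneg_left hcxs (by positivity)
    have e3 : (1/(1+C))^2 * ((1 + C) * ⟪u₀, g⟫_ℝ) - 2 * (1/(1+C)) * ⟪u₀, g⟫_ℝ + ⟪w, g⟫_ℝ
        = ⟪w, g⟫_ℝ - ⟪u₀, g⟫_ℝ / (1 + C) := by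
      field_simp
      ring
    have e4 : 0 ≤ ⟪w, g⟫_ℝ - ⟪u₀, g⟫_ℝ / (1 + C) := by linarith
    have e5 : ⟪u₀, g⟫_ℝ / (1 + C) ≤ ⟪w, g⟫_ℝ := by linarith
    calc ⟪u₀, g⟫_ℝ = (1 + C) * (⟪u₀, g⟫_ℝ / (1 + C)) := by field_simp
      _ ≤ (1 + C) * ⟪w, g⟫_ℝ := mul_le_mul_of_nonneg_left e5 ha.le
  have hineq : f x - f xs ≤ ((1 + C) ^ 2 / 2) * ⟪g,
      Matrix.toEuclideanCLM (𝕜 := ℝ) (Hess xs)⁻¹ g⟫_ℝ := by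
    have t1 : (1 + C) / 2 * ⟪u₀, g⟫_ℝ ≤ (1 + C) / 2 * ((1 + C) * ⟪w, g⟫_ℝ) :=
      mul_le_mul_of_nonneg_left A4 (by positivity)
    have t2 : ⟪g, Matrix.toEuclideanCLM (𝕜 := ℝ) (Hess xs)⁻¹ g⟫_ℝ = ⟪w, g⟫_ℝ := by
      rw [hwdef, real_inner_comm]
    rw [t2]
    nlinarith [A3]
  exact ⟨part1, τ₀, hτmem, heq, hineq⟩
end

section
/- Let f : ℝ^d → ℝ be twice continuously differentiable, μ-strongly convex, with M-Lipschitz Hessian and minimizer x_*. Suppose x_k, x_{k+1} ∈ ℝ^d satisfy ∇f(x_{k+1})ᵀ(x_{k+1} - x_k) = 0 and f(x_{k+1}) ≤ f(x_k). Let s_k = x_{k+1} - x_k, y_k = ∇f(x_{k+1}) - ∇f(x_k), and C_k = (M/μ^{3/2})√(2(f(x_k) - f(x_*))). Then f(x_k) - f(x_{k+1}) ≥ (1/(2(1 + C_k))) s_kᵀ y_k. -/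
set_option maxHeartbeats 1000000

open scoped InnerProductSpace Matrix.Norms.L2Operator

/-- Under exact line search orthogonality and an `M`-Lipschitz Hessian,
`f(x_k) - f(x_{k+1}) ≥ s_kᵀ y_k / (2 (1 + C_k))`. -/
theorem function_decrease_hessian_lipschitz {d : ℕ}
    (f : EuclideanSpace ℝ (Fin d) → ℝ) (μ M : ℝ) (hμ : 0 < μ) (hM : 0 < M)
    (Hess : EuclideanSpace ℝ (Fin d) → Matrix (Fin d) (Fin d) ℝ)
    (hf : ContDiff ℝ 2 f)
    (hHess : ∀ z, HasFDerivAt (gradient f) (Matrix.toEuclideanCLM (𝕜 := ℝ) (Hess z)) z)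
    (hsymm : ∀ z, (Hess z).IsHermitian)
    (hstr : ∀ z, (Hess z - μ • (1 : Matrix (Fin d) (Fin d) ℝ)).PosSemidef)
    (hlipH : ∀ z w, ‖Hess z - Hess w‖ ≤ M * ‖z - w‖)
    (xs : EuclideanSpace ℝ (Fin d)) (hmin : ∀ y, f xs ≤ f y)
    (xk xk1 : EuclideanSpace ℝ (Fin d))
    (horth : ⟪gradient f xk1, xk1 - xk⟫_ℝ = 0) (hdec : f xk1 ≤ f xk)
    (C : ℝ) (hC : C = (M / μ ^ ((3:ℝ)/2)) * Real.sqrt (2 * (f xk - f xs))) :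
    f xk - f xk1 ≥ (1 / (2 * (1 + C))) *
      ⟪xk1 - xk, gradient f xk1 - gradient f xk⟫_ℝ := by
  classical
  set w : EuclideanSpace ℝ (Fin d) := xk - xk1 with hw
  set ψ : ℝ → EuclideanSpace ℝ (Fin d) := fun t => xk1 + t • w with hψdef
  set G : ℝ → EuclideanSpace ℝ (Fin d) := fun t => gradient f (ψ t) with hGdef
  set F : ℝ → ℝ := fun t => f (ψ t) with hFdef
  set Hw : EuclideanSpace ℝ (Fin d) := Matrix.toEuclideanCLM (𝕜 := ℝ) (Hess xk1) w with hHwdef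
  set q0 : ℝ := ⟪w, Hw⟫_ℝ with hq0def
  have hψ0 : ψ 0 = xk1 := by simp [hψdef]
  have hψ1 : ψ 1 = xk := by simp [hψdef, hw]
  -- derivative facts
  have hψd : ∀ t : ℝ, HasDerivAt ψ w t := fun t => by
    have h := (((hasDerivAt_id t).smul_const w).const_add xk1)
    simp only [one_smul] at h
    exact h
  have hfd : Differentiable ℝ f := hf.differentiable (by norm_num)
  have hG : ∀ t : ℝ, HasDerivAt G (Matrix.toEuclideanCLM (𝕜 := ℝ) (Hess (ψ t)) w) t := fun t => by
    exact ((hHess (ψ t)).comp_hasDerivAt t (hψd t))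
  have hF : ∀ t : ℝ, HasDerivAt F ⟪G t, w⟫_ℝ t := fun t => by
    exact (((hfd (ψ t)).hasGradientAt.hasFDerivAt).comp_hasDerivAt t (hψd t))
  -- norm bound for matrix action
  have hmv : ∀ (A : Matrix (Fin d) (Fin d) ℝ) (x : EuclideanSpace ℝ (Fin d)),
      ‖Matrix.toEuclideanCLM (𝕜 := ℝ) A x‖ ≤ ‖A‖ * ‖x‖ := fun A x => by
    rw [Matrix.cstar_norm_def]
    exact (Matrix.toEuclideanCLM (𝕜 := ℝ) A).le_opNorm x
  -- strong convexity quadratic bound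
  have hquad : ∀ (z : EuclideanSpace ℝ (Fin d)) (x : EuclideanSpace ℝ (Fin d)),
      μ * ‖x‖ ^ 2 ≤ ⟪x, Matrix.toEuclideanCLM (𝕜 := ℝ) (Hess z) x⟫_ℝ := by
    intro z x
    have h2 := (hstr z).dotProduct_mulVec_nonneg (WithLp.equiv 2 (Fin d → ℝ) x)
    rw [EuclideanSpace.inner_eq_star_dotProduct, Matrix.ofLp_toEuclideanCLM]
    simp only [Matrix.sub_mulVec, Matrix.smul_mulVec, Matrix.one_mulVec,
      dotProduct_sub, dotProduct_smul, RCLike.re_to_real, star_trivial,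
      sub_nonneg, smul_eq_mul] at h2
    have hx : dotProduct (WithLp.equiv 2 (Fin d → ℝ) x) (WithLp.equiv 2 (Fin d → ℝ) x)
        = ‖x‖ ^ 2 := by
      rw [← real_inner_self_eq_norm_sq, EuclideanSpace.inner_eq_star_dotProduct]; simp
    rw [hx] at h2
    rw [dotProduct_comm]
    simpa using h2
  -- continuity facts
  have hψc : Continuous ψ := by fun_prop
  have hHc : Continuous (fun t : ℝ => Matrix.toEuclideanCLM (𝕜 := ℝ) (Hess (ψ t)) w) := by
    apply (LipschitzWith.of_dist_le_mul (K := Real.toNNReal (M * ‖w‖ ^ 2))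
      (f := fun t : ℝ => Matrix.toEuclideanCLM (𝕜 := ℝ) (Hess (ψ t)) w) ?_).continuous
    intro a b
    rw [dist_eq_norm, dist_eq_norm]
    have h1 : Matrix.toEuclideanCLM (𝕜 := ℝ) (Hess (ψ a) - Hess (ψ b)) w
        = Matrix.toEuclideanCLM (𝕜 := ℝ) (Hess (ψ a)) w
          - Matrix.toEuclideanCLM (𝕜 := ℝ) (Hess (ψ b)) w := by
      rw [map_sub (Matrix.toEuclideanCLM (𝕜 := ℝ) (n := Fin d)) (Hess (ψ a)) (Hess (ψ b)),
        ContinuousLinearMap.sub_apply]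
    rw [← h1]
    calc ‖Matrix.toEuclideanCLM (𝕜 := ℝ) (Hess (ψ a) - Hess (ψ b)) w‖
        ≤ ‖Hess (ψ a) - Hess (ψ b)‖ * ‖w‖ := hmv _ _
      _ ≤ (M * ‖ψ a - ψ b‖) * ‖w‖ :=
          mul_le_mul_of_nonneg_right (hlipH _ _) (norm_nonneg _)
      _ = (M * ‖w‖ ^ 2) * ‖a - b‖ := by
          have hab : ψ a - ψ b = (a - b) • w := by
            simp only [hψdef]; module
          rw [hab, norm_smul, Real.norm_eq_abs]
          ring
      _ = ↑(Real.toNNReal (M * ‖w‖ ^ 2)) * ‖a - b‖ := by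
          rw [Real.coe_toNNReal _ (by positivity)]
  have hGc : Continuous G := by
    rw [continuous_iff_continuousAt]; exact fun t => (hG t).continuousAt
  have hLc : Continuous (fun t : ℝ => ⟪G t, w⟫_ℝ) := hGc.inner continuous_const
  have hQc : Continuous (fun t : ℝ =>
      ⟪Matrix.toEuclideanCLM (𝕜 := ℝ) (Hess (ψ t)) w, w⟫_ℝ) := hHc.inner continuous_const
  -- orthogonality : ⟪G 0, w⟫ = 0
  have horth' : ⟪G 0, w⟫_ℝ = 0 := by
    rw [hGdef]
    simp only [hψ0]
    rw [hw, show xk - xk1 = -(xk1 - xk) by abel, inner_neg_right, horth, neg_zero]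
  -- Key bound: remainder of gradient Taylor at xk1
  have keyG : ∀ u ∈ Set.Icc (0:ℝ) 1, ‖G u - G 0 - u • Hw‖ ≤ M * ‖w‖ ^ 2 * u ^ 2 / 2 := by
    intro u hu
    have hint : (∫ v in (0:ℝ)..u,
        (Matrix.toEuclideanCLM (𝕜 := ℝ) (Hess (ψ v)) w - Hw))
        = (G u - u • Hw) - (G 0 - (0:ℝ) • Hw) := by
      apply intervalIntegral.integral_eq_sub_of_hasDerivAt
      · intro t _
        have h := ((hG t).sub ((hasDerivAt_id t).smul_const Hw))
        simp only [one_smul] at h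
        exact h
      · exact (hHc.sub continuous_const).intervalIntegrable 0 u
    have heq : G u - G 0 - u • Hw
        = ∫ v in (0:ℝ)..u, (Matrix.toEuclideanCLM (𝕜 := ℝ) (Hess (ψ v)) w - Hw) := by
      rw [hint, zero_smul]; abel
    rw [heq]
    have hb : ∀ v ∈ Set.uIoc (0:ℝ) u,
        ‖Matrix.toEuclideanCLM (𝕜 := ℝ) (Hess (ψ v)) w - Hw‖ ≤ M * ‖w‖ ^ 2 * v := by
      intro v hv
      rw [Set.uIoc_of_le hu.1] at hv
      have h1 : Matrix.toEuclideanCLM (𝕜 := ℝ) (Hess (ψ v)) w - Hw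
          = Matrix.toEuclideanCLM (𝕜 := ℝ) (Hess (ψ v) - Hess xk1) w := by
        rw [map_sub (Matrix.toEuclideanCLM (𝕜 := ℝ) (n := Fin d)) (Hess (ψ v)) (Hess xk1),
          ContinuousLinearMap.sub_apply, hHwdef]
      rw [h1]
      calc ‖Matrix.toEuclideanCLM (𝕜 := ℝ) (Hess (ψ v) - Hess xk1) w‖
          ≤ ‖Hess (ψ v) - Hess xk1‖ * ‖w‖ := hmv _ _
        _ ≤ (M * ‖ψ v - xk1‖) * ‖w‖ :=
            mul_le_mul_of_nonneg_right (hlipH _ _) (norm_nonneg _)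
        _ = M * ‖w‖ ^ 2 * v := by
            have h2 : ψ v - xk1 = v • w := by simp only [hψdef]; module
            rw [h2, norm_smul, Real.norm_eq_abs, abs_of_pos hv.1]; ring
    have hbd := intervalIntegral.norm_integral_le_abs_of_norm_le (μ := MeasureTheory.volume)
      ((MeasureTheory.ae_restrict_iff' measurableSet_uIoc).mpr
        (MeasureTheory.ae_of_all _ hb))
      ((by fun_prop : Continuous (fun v : ℝ => M * ‖w‖ ^ 2 * v)).intervalIntegrable 0 u)
    refine hbd.trans ?_
    have hval : (∫ v in (0:ℝ)..u, M * ‖w‖ ^ 2 * v) = M * ‖w‖ ^ 2 * u ^ 2 / 2 := by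
      rw [intervalIntegral.integral_const_mul, integral_id]; ring
    rw [hval, abs_of_nonneg (by positivity)]
  -- function Taylor at xk1 : |F 1 - F 0 - q0 / 2| ≤ M ‖w‖³ / 6
  have keyF : |F 1 - F 0 - q0 / 2| ≤ M * ‖w‖ ^ 3 / 6 := by
    have hint : (∫ t in (0:ℝ)..1, (⟪G t, w⟫_ℝ - t * q0))
        = (F 1 - 1 ^ 2 / 2 * q0) - (F 0 - 0 ^ 2 / 2 * q0) := by
      refine intervalIntegral.integral_eq_sub_of_hasDerivAt
        (f := fun t : ℝ => F t - t ^ 2 / 2 * q0) ?_ ?_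
      · intro t _
        have h2 : HasDerivAt (fun t : ℝ => t ^ 2 / 2 * q0) (t * q0) t := by
          have h2' := ((hasDerivAt_pow 2 t).div_const 2).mul_const q0
          refine h2'.congr_deriv ?_
          push_cast; ring
        exact (hF t).sub h2
      · exact (hLc.sub (by fun_prop)).intervalIntegrable 0 1
    have heq : F 1 - F 0 - q0 / 2 = ∫ t in (0:ℝ)..1, (⟪G t, w⟫_ℝ - t * q0) := by
      rw [hint]; ring
    rw [heq, ← Real.norm_eq_abs]
    have hb : ∀ t ∈ Set.uIoc (0:ℝ) 1,
        ‖⟪G t, w⟫_ℝ - t * q0‖ ≤ M * ‖w‖ ^ 3 / 2 * t ^ 2 := by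
      intro t ht
      rw [Set.uIoc_of_le zero_le_one] at ht
      have h1 : ⟪G t, w⟫_ℝ - t * q0 = ⟪G t - G 0 - t • Hw, w⟫_ℝ := by
        rw [inner_sub_left, inner_sub_left, horth', real_inner_smul_left,
          hq0def, real_inner_comm w Hw]
        ring
      rw [h1, Real.norm_eq_abs]
      calc |⟪G t - G 0 - t • Hw, w⟫_ℝ| ≤ ‖G t - G 0 - t • Hw‖ * ‖w‖ :=
            abs_real_inner_le_norm _ _
        _ ≤ (M * ‖w‖ ^ 2 * t ^ 2 / 2) * ‖w‖ :=
            mul_le_mul_of_nonneg_right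
              (keyG t ⟨ht.1.le, ht.2⟩) (norm_nonneg _)
        _ = M * ‖w‖ ^ 3 / 2 * t ^ 2 := by ring
    have hbd := intervalIntegral.norm_integral_le_abs_of_norm_le (μ := MeasureTheory.volume)
      ((MeasureTheory.ae_restrict_iff' measurableSet_uIoc).mpr
        (MeasureTheory.ae_of_all _ hb))
      ((by fun_prop : Continuous (fun t : ℝ => M * ‖w‖ ^ 3 / 2 * t ^ 2)).intervalIntegrable 0 1)
    refine hbd.trans ?_
    have hval : (∫ t in (0:ℝ)..1, M * ‖w‖ ^ 3 / 2 * t ^ 2) = M * ‖w‖ ^ 3 / 6 := by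
      rw [intervalIntegral.integral_const_mul, integral_pow]; norm_num; ring
    rw [hval, abs_of_nonneg (by positivity)]
  -- strong convexity : F 1 - F 0 ≥ μ ‖w‖² / 2
  have hA1 : μ * ‖w‖ ^ 2 / 2 ≤ F 1 - F 0 := by
    have hL : ∀ u ∈ Set.Icc (0:ℝ) 1, μ * ‖w‖ ^ 2 * u ≤ ⟪G u, w⟫_ℝ := by
      intro u hu
      have hint : (∫ v in (0:ℝ)..u,
          ⟪Matrix.toEuclideanCLM (𝕜 := ℝ) (Hess (ψ v)) w, w⟫_ℝ)
          = ⟪G u, w⟫_ℝ - ⟪G 0, w⟫_ℝ := by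
        apply intervalIntegral.integral_eq_sub_of_hasDerivAt
        · intro t _
          simpa using ((hG t).inner (𝕜 := ℝ) (hasDerivAt_const t w))
        · exact hQc.intervalIntegrable 0 u
      have hmono : μ * ‖w‖ ^ 2 * u ≤ ∫ v in (0:ℝ)..u,
          ⟪Matrix.toEuclideanCLM (𝕜 := ℝ) (Hess (ψ v)) w, w⟫_ℝ := by
        have h1 : (∫ _ in (0:ℝ)..u, μ * ‖w‖ ^ 2) = μ * ‖w‖ ^ 2 * u := by
          simp [smul_eq_mul]; ring
        rw [← h1]
        apply intervalIntegral.integral_mono_on hu.1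
          ((continuous_const).intervalIntegrable 0 u) (hQc.intervalIntegrable 0 u)
        intro v _
        rw [real_inner_comm]
        exact hquad (ψ v) w
      rw [hint, horth', sub_zero] at hmono
      exact hmono
    have hint2 : (∫ t in (0:ℝ)..1, ⟪G t, w⟫_ℝ) = F 1 - F 0 := by
      apply intervalIntegral.integral_eq_sub_of_hasDerivAt
      · intro t _; exact hF t
      · exact hLc.intervalIntegrable 0 1
    rw [← hint2]
    have h1 : (∫ t in (0:ℝ)..1, μ * ‖w‖ ^ 2 * t) = μ * ‖w‖ ^ 2 / 2 := by
      rw [intervalIntegral.integral_const_mul, integral_id]; ring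
    rw [← h1]
    apply intervalIntegral.integral_mono_on zero_le_one
      ((by fun_prop : Continuous (fun t : ℝ => μ * ‖w‖ ^ 2 * t)).intervalIntegrable 0 1)
      (hLc.intervalIntegrable 0 1)
    exact hL
  -- assemble
  have hF1 : F 1 = f xk := by rw [hFdef]; simp [hψ1]
  have hF0 : F 0 = f xk1 := by rw [hFdef]; simp [hψ0]
  set A : ℝ := f xk - f xk1 with hA
  have hFA : F 1 - F 0 = A := by rw [hF1, hF0]
  rw [hFA] at keyF hA1
  have hA0 : 0 ≤ A := sub_nonneg.mpr hdec
  set Δ : ℝ := f xk - f xs with hΔ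
  have hΔA : A ≤ Δ := by
    have := hmin xk1; simp only [hA, hΔ]; linarith
  have hΔ0 : 0 ≤ Δ := le_trans hA0 hΔA
  -- the target inner product
  have hP : ⟪xk1 - xk, gradient f xk1 - gradient f xk⟫_ℝ = ⟪w, G 1 - G 0⟫_ℝ := by
    have e1 : xk1 - xk = -w := by rw [hw]; abel
    have e2 : gradient f xk1 - gradient f xk = -(G 1 - G 0) := by
      rw [hGdef]; simp only [hψ0, hψ1]; abel
    rw [e1, e2, inner_neg_neg]
  set P : ℝ := ⟪w, G 1 - G 0⟫_ℝ with hPdef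
  -- bound P
  have hq : μ * ‖w‖ ^ 2 ≤ q0 := hquad xk1 w
  have hPbound : P ≤ q0 + M * ‖w‖ ^ 3 / 2 := by
    have h1 : P = q0 + ⟪w, G 1 - G 0 - (1:ℝ) • Hw⟫_ℝ := by
      rw [hPdef, hq0def, ← inner_add_right]
      congr 1
      module
    rw [h1]
    have h2 : ⟪w, G 1 - G 0 - (1:ℝ) • Hw⟫_ℝ ≤ M * ‖w‖ ^ 3 / 2 :=
      calc ⟪w, G 1 - G 0 - (1:ℝ) • Hw⟫_ℝ ≤ ‖w‖ * ‖G 1 - G 0 - (1:ℝ) • Hw‖ :=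
            real_inner_le_norm _ _
        _ ≤ ‖w‖ * (M * ‖w‖ ^ 2 * 1 ^ 2 / 2) :=
            mul_le_mul_of_nonneg_left (keyG 1 ⟨zero_le_one, le_refl 1⟩) (norm_nonneg _)
        _ = M * ‖w‖ ^ 3 / 2 := by ring
    linarith
  -- C bounds
  have hμ32 : μ ^ ((3:ℝ)/2) = μ * Real.sqrt μ := by
    rw [show (3:ℝ)/2 = 1 + 1/2 by norm_num, Real.rpow_add hμ, Real.rpow_one,
      ← Real.sqrt_eq_rpow]
  have hC0 : 0 ≤ C := by
    rw [hC]
    have : 0 < μ ^ ((3:ℝ)/2) := Real.rpow_pos_of_pos hμ _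
    positivity
  have hsqμ : 0 < Real.sqrt μ := Real.sqrt_pos.mpr hμ
  have hMC : M * ‖w‖ ≤ C * μ := by
    have hsq : ‖w‖ * Real.sqrt μ ≤ Real.sqrt (2 * Δ) := by
      rw [← Real.sqrt_sq (norm_nonneg w), ← Real.sqrt_mul (sq_nonneg _)]
      apply Real.sqrt_le_sqrt
      nlinarith
    have : C * μ = M * Real.sqrt (2 * Δ) / Real.sqrt μ := by
      rw [hC, hμ32]; field_simp
    rw [this, le_div_iff₀ hsqμ]
    calc M * ‖w‖ * Real.sqrt μ = M * (‖w‖ * Real.sqrt μ) := by ring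
      _ ≤ M * Real.sqrt (2 * Δ) := mul_le_mul_of_nonneg_left hsq hM.le
  -- final combination
  have hcube : M * ‖w‖ ^ 3 ≤ C * (2 * A) := by
    calc M * ‖w‖ ^ 3 = (M * ‖w‖) * ‖w‖ ^ 2 := by ring
      _ ≤ (C * μ) * ‖w‖ ^ 2 := mul_le_mul_of_nonneg_right hMC (sq_nonneg _)
      _ = C * (μ * ‖w‖ ^ 2) := by ring
      _ ≤ C * (2 * A) := mul_le_mul_of_nonneg_left (by linarith) hC0
  have hPfin : P ≤ 2 * (1 + C) * A := by
    have hq2 : q0 ≤ 2 * A + M * ‖w‖ ^ 3 / 3 := by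
      have := abs_le.mp keyF
      linarith [this.2]
    nlinarith [mul_nonneg hC0 hA0]
  rw [hP, ge_iff_le]
  have hpos : (0:ℝ) < 2 * (1 + C) := by linarith
  calc (1 / (2 * (1 + C))) * P ≤ (1 / (2 * (1 + C))) * (2 * (1 + C) * A) :=
        mul_le_mul_of_nonneg_left hPfin (by positivity)
    _ = A := by field_simp
end
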